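/- arXiv:1111.3559 — 4 statements merged into one kernel-verified Lean document; each statement's English description precedes it below -/
import Mathlib

section
/- Let d = 1, V : ℝ → ℝ continuous and periodic with period ℓ > 0, and E > sup V. For an initial condition (p₀,q₀) with p₀ > 0 and ½p₀² + V(q₀) = E, the asymptotic velocity exists and equals v = ℓ / τ with τ = ∫₀^ℓ dq / √(2(E - V(q))). -/
open Real Filter MeasureTheory

/-- In one dimension with periodic continuous potential of period `ℓ`
and energy `E > sup V`, a trajectory with positive initial momentum has asymptotic
velocity `ℓ / ∫₀^ℓ dq/√(2(E - V q))`. -/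
theorem stmt6
    (V : ℝ → ℝ) (hV : Continuous V)
    (ℓ : ℝ) (hℓ : 0 < ℓ) (hper : Function.Periodic V ℓ)
    (E : ℝ) (hE : sSup (Set.range V) < E)
    (p q : ℝ → ℝ) (p₀ q₀ : ℝ) (hp₀ : 0 < p₀)
    (hq : ∀ t, HasDerivAt q (p t) t)
    (hp : ∀ t, HasDerivAt p (-(deriv V (q t))) t)
    (hinitp : p 0 = p₀) (hinitq : q 0 = q₀)
    (hen : (1/2) * p₀^2 + V q₀ = E)
    (hcons : ∀ t, (1/2) * (p t)^2 + V (q t) = E) :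
    Tendsto (fun T : ℝ => q T / T) atTop
      (nhds (ℓ / ∫ x in (0:ℝ)..ℓ, 1 / Real.sqrt (2 * (E - V x)))) := by
  -- V is bounded above
  have hbdd : BddAbove (Set.range V) := by
    obtain ⟨x₀, -, hx₀⟩ := isCompact_Icc.exists_isMaxOn (Set.nonempty_Icc.2 hℓ.le)
      hV.continuousOn
    refine ⟨V x₀, ?_⟩
    rintro _ ⟨x, rfl⟩
    obtain ⟨y, hy, hxy⟩ := hper.exists_mem_Ico₀ hℓ x
    rw [hxy]
    exact hx₀ ⟨hy.1, hy.2.le⟩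
  have hpos : ∀ x, 0 < E - V x := fun x =>
    sub_pos.2 (lt_of_le_of_lt (le_csSup hbdd ⟨x, rfl⟩) hE)
  set f : ℝ → ℝ := fun x => 1 / Real.sqrt (2 * (E - V x)) with hf
  have hsq : ∀ x, 0 < Real.sqrt (2 * (E - V x)) := fun x =>
    Real.sqrt_pos.2 (by have := hpos x; linarith)
  have hfc : Continuous f := by
    apply Continuous.div continuous_const
      (Real.continuous_sqrt.comp (by continuity))
    exact fun x => (hsq x).ne'
  have hfpos : ∀ x, 0 < f x := fun x => one_div_pos.2 (hsq x)
  -- p stays positive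
  have hcp : Continuous p := continuous_iff_continuousAt.2 fun t =>
    (hp t).differentiableAt.continuousAt
  have hne : ∀ s, p s ≠ 0 := by
    intro s hs
    have h1 := hcons s
    rw [hs] at h1
    have h2 := hpos (q s)
    nlinarith
  have hppos : ∀ t, 0 < p t := by
    intro t
    by_contra hle
    push_neg at hle
    have hlt : p t < 0 := lt_of_le_of_ne hle (hne t)
    have h0 : (0:ℝ) ∈ Set.uIcc (p 0) (p t) :=
      Set.mem_uIcc.2 (Or.inr ⟨hlt.le, by rw [hinitp]; exact hp₀.le⟩)
    obtain ⟨s, -, hs⟩ := intermediate_value_uIcc (hcp.continuousOn) h0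
    exact hne s hs
  have hpeq : ∀ t, p t = Real.sqrt (2 * (E - V (q t))) := by
    intro t
    have h2 : (2 : ℝ) * (E - V (q t)) = (p t) ^ 2 := by have := hcons t; linarith
    rw [h2, Real.sqrt_sq (hppos t).le]
  -- the "action" function S
  set S : ℝ → ℝ := fun x => ∫ u in (0:ℝ)..x, f u with hS
  have hint : ∀ a b : ℝ, IntervalIntegrable f volume a b := fun a b =>
    hfc.intervalIntegrable a b
  have hSderiv : ∀ x, HasDerivAt S (f x) x := fun x =>
    intervalIntegral.integral_hasDerivAt_right (hint 0 x)
      (hfc.stronglyMeasurableAtFilter _ _) hfc.continuousAt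
  have hScont : Continuous S := continuous_iff_continuousAt.2 fun x =>
    (hSderiv x).differentiableAt.continuousAt
  -- S (q t) = t + S q₀
  have hg : ∀ t, HasDerivAt (fun t => S (q t) - t) 0 t := by
    intro t
    have h1 : HasDerivAt (fun t => S (q t)) (f (q t) * p t) t :=
      (hSderiv (q t)).comp t (hq t)
    have h2 : f (q t) * p t = 1 := by
      rw [hpeq t, hf]
      exact one_div_mul_cancel (hsq (q t)).ne'
    have h3 := h1.sub (hasDerivAt_id t)
    have h4 : f (q t) * p t - 1 = 0 := by rw [h2]; ring
    rw [h4] at h3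
    exact h3
  have hkey : ∀ t, S (q t) = t + S q₀ := by
    intro t
    have hconst : S (q t) - t = S (q 0) - 0 :=
      is_const_of_deriv_eq_zero (fun x => (hg x).differentiableAt)
        (fun x => (hg x).deriv) t 0
    rw [hinitq] at hconst
    linarith
  set τ : ℝ := ∫ x in (0:ℝ)..ℓ, f x with hτ
  have hτpos : 0 < τ :=
    intervalIntegral.intervalIntegral_pos_of_pos (hint 0 ℓ) hfpos hℓ
  have hfper : Function.Periodic f ℓ := fun x => by simp [hf, hper x]
  have hSadd : ∀ x, S (x + ℓ) = S x + τ := by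
    intro x
    have h1 : ∫ u in x..x + ℓ, f u = τ := by
      rw [hfper.intervalIntegral_add_eq x 0, hτ, zero_add]
    have h2 := intervalIntegral.integral_add_adjacent_intervals
      (hint 0 x) (hint x (x + ℓ))
    simp only [hS]
    linarith
  set h : ℝ → ℝ := fun x => S x - (τ / ℓ) * x with hh
  have hhper : Function.Periodic h ℓ := by
    intro x
    simp only [hh]
    rw [hSadd x]
    field_simp
    ring
  have hhcont : Continuous h := hScont.sub (continuous_const.mul continuous_id)
  obtain ⟨M, hM⟩ := (isCompact_Icc (a := (0:ℝ)) (b := ℓ)).exists_bound_of_continuousOn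
    hhcont.continuousOn
  have hMb : ∀ x, |h x| ≤ M := by
    intro x
    obtain ⟨y, hy, hxy⟩ := hhper.exists_mem_Ico₀ hℓ x
    rw [hxy]
    simpa [Real.norm_eq_abs] using hM y ⟨hy.1, hy.2.le⟩
  -- express q T
  have hℓ0 : ℓ ≠ 0 := hℓ.ne'
  have hτ0 : τ ≠ 0 := hτpos.ne'
  have hq_eq : ∀ T : ℝ, τ * q T = ℓ * T + ℓ * (S q₀ - h (q T)) := by
    intro T
    have h3 : h (q T) = T + S q₀ - τ / ℓ * q T := by
      simp only [hh]
      rw [hkey T]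
    rw [h3]
    field_simp
    ring
  -- limit of the error term
  have hlim : Tendsto (fun T : ℝ => (ℓ / τ) * (S q₀ - h (q T)) / T) atTop (nhds 0) := by
    apply squeeze_zero_norm' (a := fun T : ℝ => (ℓ / τ) * (|S q₀| + M) / T)
    · filter_upwards [eventually_ge_atTop (1 : ℝ)] with T hT
      have hT0 : 0 < T := lt_of_lt_of_le one_pos hT
      have hb : |S q₀ - h (q T)| ≤ |S q₀| + M :=
        le_trans (abs_sub _ _) (by have := hMb (q T); linarith)
      have hlτ : 0 < ℓ / τ := div_pos hℓ hτpos
      rw [Real.norm_eq_abs, abs_div, abs_mul, abs_of_pos hlτ, abs_of_pos hT0]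
      gcongr
    · exact Tendsto.div_atTop tendsto_const_nhds tendsto_id
  have hfin : Tendsto (fun T : ℝ => ℓ / τ + (ℓ / τ) * (S q₀ - h (q T)) / T) atTop
      (nhds (ℓ / τ + 0)) := tendsto_const_nhds.add hlim
  rw [add_zero] at hfin
  apply Tendsto.congr' _ hfin
  filter_upwards [eventually_gt_atTop (0 : ℝ)] with T hT
  have hT0 : T ≠ 0 := hT.ne'
  have h5 := hq_eq T
  set a := q T with ha
  set b := h a with hb
  clear_value b a
  field_simp
  linear_combination (-1) * h5
end

section
/- Let V : ℝ^d → ℝ (d ≥ 3) be C², bounded with bounded first and second derivatives, and E > sup V. With u := (E-V)^{(d-2)/4} and R the scalar curvature of the Jacobi metric, the curvature integral over balls satisfies ∫_{B_r} R dm = 4 (d-1)/(d-2) ∫_{B_r} ‖∇u‖² dλ^d + O(r^{d-1}) as r → ∞, where dm = u^{2d/(d-2)} dλ^d is the Riemannian volume; in particular lim inf_{r→∞} r^{-d} ∫_{B_r} R dm ≥ 0. -/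
open Real Filter MeasureTheory Metric Topology


lemma aux_pow_sub_pow (a b : ℝ) (hb : 0 ≤ b) (hba : b ≤ a) (n : ℕ) :
    a ^ (n+1) - b ^ (n+1) ≤ (n+1 : ℝ) * a ^ n * (a - b) := by
  induction n with
  | zero => simp
  | succ n ih =>
    have ha : 0 ≤ a := hb.trans hba
    have hbn : b ^ (n+1) ≤ a ^ (n+1) := pow_le_pow_left₀ hb hba _
    have h2 : a * (a ^ (n+1) - b ^ (n+1)) ≤ a * ((n+1 : ℝ) * a ^ n * (a - b)) :=
      mul_le_mul_of_nonneg_left ih ha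
    have h3 : a ^ (n+2) - b ^ (n+2) = a * (a ^ (n+1) - b ^ (n+1)) + b ^ (n+1) * (a - b) := by ring
    have h4 : b ^ (n+1) * (a - b) ≤ a ^ (n+1) * (a - b) :=
      mul_le_mul_of_nonneg_right hbn (by linarith)
    have h5 : a * ((n+1 : ℝ) * a ^ n * (a - b)) = (n+1+1 : ℝ) * a ^ (n+1) * (a - b) - a ^ (n+1) * (a-b) := by ring
    push_cast
    show a ^ (n+2) - b ^ (n+2) ≤ _
    linarith [h2, h3, h4, h5]

lemma aux_key {d : ℕ} (hd1 : 1 ≤ d) (v : EuclideanSpace ℝ (Fin d)) (hv : ‖v‖ = 1)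
    (H : EuclideanSpace ℝ (Fin d) → ℝ)
    (H' : EuclideanSpace ℝ (Fin d) → EuclideanSpace ℝ (Fin d) →L[ℝ] ℝ)
    (hH : ∀ x, HasFDerivAt H (H' x) x)
    (M M' : ℝ) (hM : ∀ x, |H x| ≤ M) (hM' : ∀ x, ‖H' x‖ ≤ M')
    (r : ℝ) (hr : 1 ≤ r) :
    |∫ x in ball (0 : EuclideanSpace ℝ (Fin d)) r, H' x v| ≤
      M * (volume (ball (0 : EuclideanSpace ℝ (Fin d)) 1)).toReal * d * 2 ^ (d + 1) * r ^ (d - 1) := by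
  haveI : Nonempty (Fin d) := ⟨⟨0, by omega⟩⟩
  have hr0 : (0:ℝ) < r := lt_of_lt_of_le one_pos hr
  obtain ⟨m, rfl⟩ : ∃ m, d = m + 1 := ⟨d - 1, by omega⟩
  set ω := (volume (ball (0 : EuclideanSpace ℝ (Fin (m+1))) 1)).toReal with hω
  have hω0 : 0 ≤ ω := ENNReal.toReal_nonneg
  have hM0 : 0 ≤ M := (abs_nonneg _).trans (hM 0)
  have hHdiff : Differentiable ℝ H := fun x => (hH x).differentiableAt
  have hHcont : Continuous H := hHdiff.continuous
  set B : Set (EuclideanSpace ℝ (Fin (m+1))) := ball 0 r with hB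
  have hIB : ∀ (G : EuclideanSpace ℝ (Fin (m+1)) → ℝ), Continuous G →
      ∀ (a : EuclideanSpace ℝ (Fin (m+1))) (ρ : ℝ), IntegrableOn G (ball a ρ) volume :=
    fun G hG a ρ => (hG.continuousOn.integrableOn_compact (isCompact_closedBall a ρ)).mono_set
      ball_subset_closedBall
  have lip : ∀ x y : EuclideanSpace ℝ (Fin (m+1)), ‖H y - H x‖ ≤ M' * ‖y - x‖ := fun x y =>
    Convex.norm_image_sub_le_of_norm_hasFDerivWithin_le
      (fun z _ => (hH z).hasFDerivWithinAt) (fun z _ => hM' z) convex_univ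
      (Set.mem_univ x) (Set.mem_univ y)
  set t : ℕ → ℝ := fun n => ((n:ℝ)+1)⁻¹ with ht
  have ht_pos : ∀ n, 0 < t n := fun n => by positivity
  have ht_le1 : ∀ n, t n ≤ 1 := fun n => by
    rw [ht]; simp only []
    rw [inv_le_one₀ (by positivity)]; exact le_add_of_nonneg_left (Nat.cast_nonneg n)
  have ht_lim : Tendsto t atTop (𝓝 0) := by
    have := tendsto_one_div_add_atTop_nhds_zero_nat (𝕜 := ℝ)
    simpa [one_div] using this
  -- Step 1 : dominated convergence
  have key_lim : Tendsto (fun n => ∫ x in B, (H (x + t n • v) - H x) / t n) atTop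
      (𝓝 (∫ x in B, H' x v)) := by
    apply tendsto_integral_of_dominated_convergence (fun _ => M')
    · intro n
      exact (((hHcont.comp (continuous_id.add continuous_const)).sub hHcont).div_const
        _).aestronglyMeasurable
    · exact (integrableOn_const measure_ball_lt_top.ne)
    · intro n
      refine Eventually.of_forall fun x => ?_
      have h1 := lip x (x + t n • v)
      have h2 : ‖x + t n • v - x‖ = t n := by
        simp [norm_smul, hv, abs_of_pos (ht_pos n)]
      rw [h2] at h1
      rw [Real.norm_eq_abs, abs_div, abs_of_pos (ht_pos n), div_le_iff₀ (ht_pos n)]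
      calc |H (x + t n • v) - H x| ≤ M' * t n := by
            simpa [Real.norm_eq_abs] using h1
        _ = M' * t n := rfl
    · refine Eventually.of_forall fun x => ?_
      have h1 : HasDerivAt (fun s : ℝ => x + s • v) v 0 := by
        simpa using ((hasDerivAt_id (0:ℝ)).smul_const v).const_add x
      have h2 : HasDerivAt (fun s : ℝ => H (x + s • v)) (H' x v) 0 := by
        have := (hH (x + (0:ℝ) • v)).comp_hasDerivAt 0 h1
        rw [zero_smul, add_zero] at this
        exact this
      have h3 := hasDerivAt_iff_tendsto_slope.mp h2
      have h4 : Tendsto t atTop (𝓝[≠] (0:ℝ)) := by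
        refine tendsto_nhdsWithin_iff.mpr ⟨ht_lim, Eventually.of_forall fun n => ?_⟩
        exact Set.mem_compl_singleton_iff.mpr (ht_pos n).ne'
      have h5 := h3.comp h4
      have : (fun n => slope (fun s : ℝ => H (x + s • v)) 0 (t n))
          = fun n => (H (x + t n • v) - H x) / t n := by
        funext n
        rw [slope_def_field]
        simp
      rwa [Function.comp_def, this] at h5
  -- Step 2 : uniform bound for each n
  have hbound : ∀ n, |∫ x in B, (H (x + t n • v) - H x) / t n| ≤
      M * ω * (m+1) * 2 ^ (m + 2) * r ^ m := by
    intro n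
    set s : ℝ := t n with hs
    have hs0 : 0 < s := ht_pos n
    have hs1 : s ≤ 1 := ht_le1 n
    have hsvnorm : ‖s • v‖ = s := by simp [norm_smul, hv, abs_of_pos hs0]
    -- translation identity
    have hpre : (fun x : EuclideanSpace ℝ (Fin (m+1)) => x + s • v) ⁻¹' (ball (s • v) r) = B := by
      ext x
      simp [hB, mem_ball, dist_eq_norm]
    have htrans : ∫ x in B, H (x + s • v) = ∫ x in ball (s • v) r, H x := by
      rw [← hpre]
      exact (measurePreserving_add_right volume (s • v)).setIntegral_preimage_emb
        (measurableEmbedding_addRight _) H _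
    have hIcomp : IntegrableOn (fun x => H (x + s • v)) B volume :=
      hIB _ (hHcont.comp (continuous_id.add continuous_const)) 0 r
    have hsplit : ∫ x in B, (H (x + s • v) - H x) / s
        = ((∫ x in ball (s • v) r, H x) - ∫ x in B, H x) / s := by
      rw [← htrans, ← integral_sub hIcomp (hIB _ hHcont 0 r), integral_div]
    -- decomposition
    have h1 := integral_inter_add_diff (μ := volume) (f := H) (s := ball (s • v) r) (t := B)
      measurableSet_ball (hIB _ hHcont _ _)
    have h2 := integral_inter_add_diff (μ := volume) (f := H) (s := B) (t := ball (s • v) r)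
      measurableSet_ball (hIB _ hHcont _ _)
    rw [Set.inter_comm] at h2
    -- inclusions
    have hsub1 : ball (s • v) r \ B ⊆ ball (0 : EuclideanSpace ℝ (Fin (m+1))) (r+s) \ ball 0 (r-s) := by
      rintro x ⟨hx1, hx2⟩
      rw [mem_ball, dist_eq_norm] at hx1
      rw [hB, mem_ball, dist_eq_norm, sub_zero, not_lt] at hx2
      have t1 : ‖x‖ - ‖x - s • v‖ ≤ ‖x - (x - s • v)‖ := norm_sub_norm_le _ _
      simp only [sub_sub_cancel, hsvnorm] at t1
      constructor
      · rw [mem_ball, dist_eq_norm, sub_zero]; linarith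
      · rw [mem_ball, dist_eq_norm, sub_zero, not_lt]; linarith
    have hsub2 : B \ ball (s • v) r ⊆ ball (0 : EuclideanSpace ℝ (Fin (m+1))) (r+s) \ ball 0 (r-s) := by
      rintro x ⟨hx1, hx2⟩
      rw [hB, mem_ball, dist_eq_norm, sub_zero] at hx1
      rw [mem_ball, dist_eq_norm, not_lt] at hx2
      have t2 : ‖x - s • v‖ ≤ ‖x‖ + s := by
        calc ‖x - s • v‖ ≤ ‖x‖ + ‖s • v‖ := norm_sub_le _ _
          _ = ‖x‖ + s := by rw [hsvnorm]
      constructor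
      · rw [mem_ball, dist_eq_norm, sub_zero]; linarith
      · rw [mem_ball, dist_eq_norm, sub_zero, not_lt]; linarith
    -- volume of the annulus
    have hrs0 : (0:ℝ) ≤ r - s := by linarith
    have hannulus : (volume (ball (0 : EuclideanSpace ℝ (Fin (m+1))) (r+s) \ ball 0 (r-s))).toReal
        = ((r+s) ^ (m+1) - (r-s) ^ (m+1)) * ω := by
      rw [measure_diff (ball_subset_ball (by linarith)) measurableSet_ball.nullMeasurableSet
        measure_ball_lt_top.ne]
      rw [Measure.addHaar_ball _ _ (by linarith : (0:ℝ) ≤ r + s),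
        Measure.addHaar_ball _ _ hrs0, finrank_euclideanSpace_fin]
      rw [ENNReal.toReal_sub_of_le (mul_le_mul_left (ENNReal.ofReal_le_ofReal
          (pow_le_pow_left₀ hrs0 (by linarith) _)) _)
        (ENNReal.mul_ne_top ENNReal.ofReal_ne_top measure_ball_lt_top.ne)]
      rw [ENNReal.toReal_mul, ENNReal.toReal_mul, ENNReal.toReal_ofReal (by positivity),
        ENNReal.toReal_ofReal (by positivity)]
      ring
    have hannfin : volume (ball (0 : EuclideanSpace ℝ (Fin (m+1))) (r+s) \ ball 0 (r-s)) < ⊤ :=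
      lt_of_le_of_lt (measure_mono Set.diff_subset) measure_ball_lt_top
    -- bound the two pieces
    have hpiece : ∀ S : Set (EuclideanSpace ℝ (Fin (m+1))), MeasurableSet S →
        S ⊆ ball (0 : EuclideanSpace ℝ (Fin (m+1))) (r+s) \ ball 0 (r-s) →
        |∫ x in S, H x| ≤ M * (((r+s) ^ (m+1) - (r-s) ^ (m+1)) * ω) := by
      intro S hSm hSsub
      have hfin : volume S < ⊤ := lt_of_le_of_lt (measure_mono hSsub) hannfin
      have := norm_setIntegral_le_of_norm_le_const (μ := volume) (s := S) (f := H) hfin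
        (fun x _ => by rw [Real.norm_eq_abs]; exact hM x)
      rw [Real.norm_eq_abs] at this
      refine this.trans ?_
      rw [← hannulus]
      exact mul_le_mul_of_nonneg_left (ENNReal.toReal_mono hannfin.ne (measure_mono hSsub)) hM0
    have hdm : MeasurableSet (ball (s • v) r \ B) := measurableSet_ball.diff measurableSet_ball
    have hdm2 : MeasurableSet (B \ ball (s • v) r) := measurableSet_ball.diff measurableSet_ball
    have e1 := hpiece _ hdm hsub1
    have e2 := hpiece _ hdm2 hsub2
    -- power estimate
    have hpow : (r+s) ^ (m+1) - (r-s) ^ (m+1) ≤ (m+1 : ℝ) * (2*r) ^ m * (2*s) := by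
      have := aux_pow_sub_pow (r+s) (r-s) hrs0 (by linarith) m
      have h6 : (r+s) ^ m ≤ (2*r) ^ m := pow_le_pow_left₀ (by linarith) (by linarith) m
      have h7 : (m+1 : ℝ) * (r+s) ^ m * ((r+s) - (r-s)) ≤ (m+1 : ℝ) * (2*r) ^ m * (2*s) := by
        have : ((r+s) - (r-s)) = 2*s := by ring
        rw [this]
        apply mul_le_mul_of_nonneg_right _ (by linarith)
        apply mul_le_mul_of_nonneg_left h6 (by positivity)
      linarith
    -- put everything together
    rw [hsplit]
    rw [abs_div, abs_of_pos hs0, div_le_iff₀ hs0]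
    have habs : |(∫ x in ball (s • v) r, H x) - ∫ x in B, H x|
        ≤ |∫ x in ball (s • v) r \ B, H x| + |∫ x in B \ ball (s • v) r, H x| := by
      have : (∫ x in ball (s • v) r, H x) - ∫ x in B, H x
          = (∫ x in ball (s • v) r \ B, H x) - ∫ x in B \ ball (s • v) r, H x := by
        linarith [h1, h2]
      rw [this]
      exact abs_sub _ _
    have hchain : |(∫ x in ball (s • v) r, H x) - ∫ x in B, H x|
        ≤ 2 * M * (((m+1 : ℝ) * (2*r) ^ m * (2*s)) * ω) := by
      refine habs.trans ?_
      have := add_le_add e1 e2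
      refine this.trans ?_
      have h8 : M * (((r+s) ^ (m+1) - (r-s) ^ (m+1)) * ω) ≤ M * (((m+1 : ℝ) * (2*r) ^ m * (2*s)) * ω) :=
        mul_le_mul_of_nonneg_left (mul_le_mul_of_nonneg_right hpow hω0) hM0
      linarith
    refine hchain.trans (le_of_eq ?_)
    rw [mul_pow, pow_add]
    ring
  -- conclude
  have hfinal := le_of_tendsto (key_lim.abs) (Eventually.of_forall hbound)
  refine hfinal.trans (le_of_eq ?_)
  have hcast : ((m+1 : ℕ) : ℝ) = (m:ℝ)+1 := by push_cast; ring
  rw [Nat.add_sub_cancel, hcast]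

/-- The Euclidean Laplacian of a scalar function on `ℝ^d`. -/
noncomputable def laplacian {d : ℕ} (f : EuclideanSpace ℝ (Fin d) → ℝ)
    (q : EuclideanSpace ℝ (Fin d)) : ℝ :=
  ∑ i : Fin d, fderiv ℝ (fun x => fderiv ℝ f x (EuclideanSpace.single i 1)) q
    (EuclideanSpace.single i 1)

set_option maxHeartbeats 4000000 in
/-- For `d ≥ 3`, bounded `V` with bounded derivatives and
`E > sup V`, the curvature integral of the Jacobi metric over balls satisfies
`∫_{B_r} R dm = 4 (d-1)/(d-2) ∫_{B_r} ‖∇u‖² dλ + O(r^{d-1})`, where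
`dm = u^{2d/(d-2)} dλ`; in particular `liminf_{r→∞} r^{-d} ∫_{B_r} R dm ≥ 0`. -/
theorem stmt12 {d : ℕ} (hd : 3 ≤ d)
    (V : EuclideanSpace ℝ (Fin d) → ℝ) (hV : ContDiff ℝ 2 V)
    (c : ℝ)
    (hb : ∀ q, |V q| + ‖fderiv ℝ V q‖ + ‖fderiv ℝ (fderiv ℝ V) q‖ ≤ c)
    (E : ℝ) (hE : sSup (Set.range V) < E)
    (u R : EuclideanSpace ℝ (Fin d) → ℝ)
    (hu : ∀ q, u q = (E - V q) ^ (((d : ℝ) - 2) / 4))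
    (hR : ∀ q, R q = -4 * ((d : ℝ) - 1) / ((d : ℝ) - 2)
      * (u q) ^ (-(((d : ℝ) + 2) / ((d : ℝ) - 2))) * laplacian u q) :
    (∃ C : ℝ, ∀ r : ℝ, 1 ≤ r →
      |(∫ q in Metric.ball (0 : EuclideanSpace ℝ (Fin d)) r,
          R q * (u q) ^ (2 * (d : ℝ) / ((d : ℝ) - 2)))
        - 4 * ((d : ℝ) - 1) / ((d : ℝ) - 2) *
          ∫ q in Metric.ball (0 : EuclideanSpace ℝ (Fin d)) r, ‖gradient u q‖^2|
        ≤ C * r ^ ((d : ℝ) - 1)) ∧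
    0 ≤ Filter.liminf (fun r : ℝ =>
      r ^ (-(d : ℝ)) * ∫ q in Metric.ball (0 : EuclideanSpace ℝ (Fin d)) r,
        R q * (u q) ^ (2 * (d : ℝ) / ((d : ℝ) - 2))) Filter.atTop := by
  classical
  have hd1 : 1 ≤ d := by omega
  have hd3 : (3:ℝ) ≤ (d:ℝ) := by exact_mod_cast hd
  have hdm2 : ((d:ℝ)) - 2 ≠ 0 := by linarith
  set p : ℝ := ((d:ℝ) - 2)/4 with hp
  have hppos : 0 < p := by rw [hp]; exact div_pos (by linarith) (by norm_num)
  -- bounds on V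
  have hc0 : 0 ≤ c := le_trans (by positivity) (hb 0)
  have hVb : ∀ q, |V q| ≤ c := fun q => by
    have h1 := hb q
    have h2 := norm_nonneg (fderiv ℝ V q)
    have h3 := norm_nonneg (fderiv ℝ (fderiv ℝ V) q)
    linarith
  have hVdb : ∀ q, ‖fderiv ℝ V q‖ ≤ c := fun q => by
    have h1 := hb q
    have h2 := abs_nonneg (V q)
    have h3 := norm_nonneg (fderiv ℝ (fderiv ℝ V) q)
    linarith
  have hVddb : ∀ q, ‖fderiv ℝ (fderiv ℝ V) q‖ ≤ c := fun q => by
    have h1 := hb q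
    have h2 := abs_nonneg (V q)
    have h3 := norm_nonneg (fderiv ℝ V q)
    linarith
  set ε : ℝ := E - sSup (Set.range V) with hεdef
  have hε : 0 < ε := sub_pos.mpr hE
  have hWlb : ∀ q, ε ≤ E - V q := by
    intro q
    have h1 : V q ≤ sSup (Set.range V) :=
      le_csSup ⟨c, fun y hy => by obtain ⟨q', rfl⟩ := hy; exact (abs_le.mp (hVb q')).2⟩
        (Set.mem_range_self q)
    rw [hεdef]; linarith
  have hWub : ∀ q, E - V q ≤ E + c := fun q => by
    have := (abs_le.mp (hVb q)).1; linarith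
  have hWpos : ∀ q, 0 < E - V q := fun q => lt_of_lt_of_le hε (hWlb q)
  -- derivatives of V
  have hVdiff : Differentiable ℝ V := hV.differentiable (by norm_num)
  set Vd : EuclideanSpace ℝ (Fin d) → EuclideanSpace ℝ (Fin d) →L[ℝ] ℝ := fderiv ℝ V with hVddef
  have hVd : ∀ x, HasFDerivAt V (Vd x) x := fun x => (hVdiff x).hasFDerivAt
  have hVd1 : ContDiff ℝ 1 Vd := hV.fderiv_right (by norm_num)
  set Vdd := fderiv ℝ Vd with hVdddef
  have hVdd : ∀ x, HasFDerivAt Vd (Vdd x) x := fun x => (hVd1.differentiable one_ne_zero x).hasFDerivAt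
  have hVdc : Continuous Vd := hVd1.continuous
  have hVddc : Continuous Vdd := hVd1.continuous_fderiv one_ne_zero
  -- W and u'
  set W : EuclideanSpace ℝ (Fin d) → ℝ := fun q => E - V q with hWdef
  have hW' : ∀ x, HasFDerivAt W (-Vd x) x := fun x => (hVd x).const_sub E
  set u' : EuclideanSpace ℝ (Fin d) → EuclideanSpace ℝ (Fin d) →L[ℝ] ℝ :=
    fun x => (p * W x ^ (p - 1)) • (-Vd x) with hu'def
  have huW : ∀ x, HasFDerivAt (fun q => W q ^ p) (u' x) x :=
    fun x => (hW' x).rpow_const (Or.inl (hWpos x).ne')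
  have huWq : ∀ q, u q = W q ^ p := hu
  have hueq : u = fun q => W q ^ p := funext huWq
  have huD : ∀ x, HasFDerivAt u (u' x) x := fun x => by rw [hueq]; exact huW x
  set e : Fin d → EuclideanSpace ℝ (Fin d) := fun i => EuclideanSpace.single i (1:ℝ) with hedef
  have he : ∀ i, ‖e i‖ = 1 := fun i => by rw [hedef]; simp
  -- second derivative of u
  set u'' : EuclideanSpace ℝ (Fin d) → EuclideanSpace ℝ (Fin d) →
      EuclideanSpace ℝ (Fin d) →L[ℝ] ℝ :=
    fun w x => (p * W x ^ (p - 1)) • (-((ContinuousLinearMap.apply ℝ ℝ w).comp (Vdd x)))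
      + (-(Vd x w)) • ((p * ((p - 1) * W x ^ (p - 2))) • (-Vd x)) with hu''def
  have hu''D : ∀ w x, HasFDerivAt (fun y => u' y w) (u'' w x) x := by
    intro w x
    have hexp : p - 1 - 1 = p - 2 := by ring
    have h1 : HasFDerivAt (fun y => W y ^ (p - 1)) (((p-1) * W x ^ (p - 1 - 1)) • (-Vd x)) x :=
      (hW' x).rpow_const (Or.inl (hWpos x).ne')
    have h2 := h1.const_mul p
    rw [smul_smul, hexp] at h2
    have h4 : HasFDerivAt (fun y => Vd y w) ((ContinuousLinearMap.apply ℝ ℝ w).comp (Vdd x)) x :=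
      (ContinuousLinearMap.apply ℝ ℝ w).hasFDerivAt.comp x (hVdd x)
    have hmul := h2.mul h4.neg
    have heq2 : (fun y => u' y w) = fun y => (p * W y ^ (p - 1)) * (-(Vd y w)) := by
      funext y
      simp [hu'def]
    rw [heq2]
    exact hmul
  -- range bounds
  have hrange : ∀ (s : ℝ) (q), W q ^ s ≤ max (ε ^ s) ((E + c) ^ s) := by
    intro s q
    rcases le_or_gt 0 s with hs | hs
    · exact le_max_of_le_right (Real.rpow_le_rpow (hWpos q).le (hWub q) hs)
    · exact le_max_of_le_left (Real.rpow_le_rpow_of_nonpos hε (hWlb q) hs.le)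
  set B1 : ℝ := max (ε ^ (p-1)) ((E + c) ^ (p-1)) with hB1def
  set B2 : ℝ := max (ε ^ (p-2)) ((E + c) ^ (p-2)) with hB2def
  set A0 : ℝ := max (ε ^ p) ((E + c) ^ p) with hA0def
  have hB1p : 0 ≤ B1 := le_max_of_le_left (Real.rpow_nonneg hε.le _)
  have hB2p : 0 ≤ B2 := le_max_of_le_left (Real.rpow_nonneg hε.le _)
  have hA0p : 0 ≤ A0 := le_max_of_le_left (Real.rpow_nonneg hε.le _)
  have hWnn : ∀ (s : ℝ) (q), 0 ≤ W q ^ s := fun s q => Real.rpow_nonneg (hWpos q).le _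
  set A1 : ℝ := p * B1 * c with hA1def
  have hA1p : 0 ≤ A1 := by
    rw [hA1def]; exact mul_nonneg (mul_nonneg hppos.le hB1p) hc0
  have hu'b : ∀ x, ‖u' x‖ ≤ A1 := by
    intro x
    have h1 : ‖u' x‖ = |p * W x ^ (p-1)| * ‖Vd x‖ := by
      show ‖(p * W x ^ (p-1)) • (-Vd x)‖ = _
      rw [norm_smul (p * W x ^ (p-1)) (-Vd x), norm_neg, Real.norm_eq_abs]
    rw [h1, hA1def]
    have h2 : |p * W x ^ (p-1)| ≤ p * B1 := by
      rw [abs_of_nonneg (mul_nonneg hppos.le (hWnn _ x))]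
      exact mul_le_mul_of_nonneg_left (hrange _ x) hppos.le
    exact mul_le_mul h2 (hVdb x) (norm_nonneg _) (mul_nonneg hppos.le hB1p)
  have hu'wb : ∀ x w, ‖w‖ = 1 → |u' x w| ≤ A1 := by
    intro x w hw
    have h1 : |u' x w| ≤ ‖u' x‖ * ‖w‖ := (u' x).le_opNorm w
    rw [hw, mul_one] at h1
    exact h1.trans (hu'b x)
  have happlyb : ∀ (w x), ‖(ContinuousLinearMap.apply ℝ ℝ w).comp (Vdd x)‖ ≤ c * ‖w‖ := by
    intro w x
    refine ContinuousLinearMap.opNorm_le_bound _ (by positivity) fun y => ?_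
    calc ‖((ContinuousLinearMap.apply ℝ ℝ w).comp (Vdd x)) y‖ = ‖(Vdd x y) w‖ := rfl
      _ ≤ ‖Vdd x y‖ * ‖w‖ := ContinuousLinearMap.le_opNorm _ _
      _ ≤ (‖Vdd x‖ * ‖y‖) * ‖w‖ :=
          mul_le_mul_of_nonneg_right (ContinuousLinearMap.le_opNorm _ _) (norm_nonneg _)
      _ ≤ (c * ‖y‖) * ‖w‖ :=
          mul_le_mul_of_nonneg_right
            (mul_le_mul_of_nonneg_right (hVddb x) (norm_nonneg _)) (norm_nonneg _)
      _ = c * ‖w‖ * ‖y‖ := by ring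
  set A2 : ℝ := p * B1 * c + c * (p * (|p-1| * B2) * c) with hA2def
  have hA2p : 0 ≤ A2 := by
    rw [hA2def]
    have : 0 ≤ p * (|p-1| * B2) * c :=
      mul_nonneg (mul_nonneg hppos.le (mul_nonneg (abs_nonneg _) hB2p)) hc0
    have := mul_nonneg hc0 this
    nlinarith [mul_nonneg (mul_nonneg hppos.le hB1p) hc0]
  have hu''b : ∀ w x, ‖w‖ = 1 → ‖u'' w x‖ ≤ A2 := by
    intro w x hw
    have t1 : ‖(p * W x ^ (p-1)) • (-((ContinuousLinearMap.apply ℝ ℝ w).comp (Vdd x)))‖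
        ≤ (p * B1) * c := by
      rw [norm_smul (p * W x ^ (p-1)) (-((ContinuousLinearMap.apply ℝ ℝ w).comp (Vdd x))),
        norm_neg, Real.norm_eq_abs]
      have h1 : |p * W x ^ (p-1)| ≤ p * B1 := by
        rw [abs_of_nonneg (mul_nonneg hppos.le (hWnn _ x))]
        exact mul_le_mul_of_nonneg_left (hrange _ x) hppos.le
      have h2 : ‖(ContinuousLinearMap.apply ℝ ℝ w).comp (Vdd x)‖ ≤ c := by
        have := happlyb w x; rwa [hw, mul_one] at this
      exact mul_le_mul h1 h2 (norm_nonneg _) (mul_nonneg hppos.le hB1p)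
    have t2 : ‖(-(Vd x w)) • ((p * ((p-1) * W x ^ (p-2))) • (-Vd x))‖
        ≤ c * ((p * (|p-1| * B2)) * c) := by
      rw [norm_smul (-(Vd x w)) ((p * ((p-1) * W x ^ (p-2))) • (-Vd x)),
        norm_smul (p * ((p-1) * W x ^ (p-2))) (-Vd x), norm_neg, norm_neg,
        Real.norm_eq_abs, Real.norm_eq_abs]
      have h3 : |Vd x w| ≤ c := by
        have h := (Vd x).le_opNorm w
        rw [hw, mul_one] at h
        exact (Real.norm_eq_abs _ ▸ h).trans (hVdb x)
      have h4 : |p * ((p-1) * W x ^ (p-2))| ≤ p * (|p-1| * B2) := by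
        rw [abs_mul, abs_of_pos hppos, abs_mul]
        apply mul_le_mul_of_nonneg_left _ hppos.le
        rw [abs_of_nonneg (hWnn _ x)]
        exact mul_le_mul_of_nonneg_left (hrange _ x) (abs_nonneg _)
      have h5 : |p * ((p-1) * W x ^ (p-2))| * ‖Vd x‖ ≤ (p * (|p-1| * B2)) * c :=
        mul_le_mul h4 (hVdb x) (norm_nonneg _)
          (mul_nonneg hppos.le (mul_nonneg (abs_nonneg _) hB2p))
      exact mul_le_mul h3 h5 (mul_nonneg (abs_nonneg _) (norm_nonneg _)) hc0
    show ‖(p * W x ^ (p - 1)) • (-((ContinuousLinearMap.apply ℝ ℝ w).comp (Vdd x)))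
        + (-(Vd x w)) • ((p * ((p - 1) * W x ^ (p - 2))) • (-Vd x))‖ ≤ A2
    refine (norm_add_le _ _).trans ?_
    refine (add_le_add t1 t2).trans (le_of_eq ?_)
    rw [hA2def]
  -- the auxiliary functions H and H'
  set Hf : Fin d → EuclideanSpace ℝ (Fin d) → ℝ :=
    fun i x => 2 * W x ^ p * (u' x (e i)) with hHfdef
  set Hf' : Fin d → EuclideanSpace ℝ (Fin d) → EuclideanSpace ℝ (Fin d) →L[ℝ] ℝ :=
    fun i x => (2 * W x ^ p) • (u'' (e i) x) + (u' x (e i)) • ((2:ℝ) • u' x) with hHf'def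
  have hHfD : ∀ i x, HasFDerivAt (Hf i) (Hf' i x) x := by
    intro i x
    have h1 : HasFDerivAt (fun y => 2 * W y ^ p) ((2:ℝ) • u' x) x := (huW x).const_mul 2
    exact h1.mul (hu''D (e i) x)
  set M0 : ℝ := 2 * A0 * A1 with hM0def
  set M1 : ℝ := 2 * A0 * A2 + A1 * (2 * A1) with hM1def
  have hHfb : ∀ i x, |Hf i x| ≤ M0 := by
    intro i x
    show |2 * W x ^ p * (u' x (e i))| ≤ 2 * A0 * A1
    have h1 : |2 * W x ^ p * (u' x (e i))| = 2 * |W x ^ p| * |u' x (e i)| := by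
      rw [abs_mul, abs_mul]; norm_num
    rw [h1]
    have h2 : |W x ^ p| ≤ A0 := by rw [abs_of_nonneg (hWnn _ x)]; exact hrange _ x
    have h3 : |u' x (e i)| ≤ A1 := hu'wb x (e i) (he i)
    have h4 : 2 * |W x ^ p| ≤ 2 * A0 := by linarith
    exact mul_le_mul h4 h3 (abs_nonneg _) (by linarith)
  have hHf'b : ∀ i x, ‖Hf' i x‖ ≤ M1 := by
    intro i x
    have t1 : ‖(2 * W x ^ p) • (u'' (e i) x)‖ ≤ 2 * A0 * A2 := by
      rw [norm_smul (2 * W x ^ p) (u'' (e i) x), Real.norm_eq_abs]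
      have h2 : |2 * W x ^ p| ≤ 2 * A0 := by
        rw [abs_mul, abs_of_nonneg (hWnn _ x), abs_two]
        nlinarith [hrange p x]
      exact mul_le_mul h2 (hu''b (e i) x (he i)) (norm_nonneg _) (by linarith)
    have t2 : ‖(u' x (e i)) • ((2:ℝ) • u' x)‖ ≤ A1 * (2 * A1) := by
      rw [norm_smul (u' x (e i)) ((2:ℝ) • u' x), norm_smul (2:ℝ) (u' x),
        Real.norm_eq_abs, Real.norm_eq_abs]
      have h3 : |u' x (e i)| ≤ A1 := hu'wb x (e i) (he i)
      have h4 : |(2:ℝ)| * ‖u' x‖ ≤ 2 * A1 := by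
        rw [abs_two]
        linarith [hu'b x]
      exact mul_le_mul h3 h4 (by positivity) hA1p
    show ‖(2 * W x ^ p) • (u'' (e i) x) + (u' x (e i)) • ((2:ℝ) • u' x)‖ ≤ 2 * A0 * A2 + A1 * (2 * A1)
    exact (norm_add_le _ _).trans (add_le_add t1 t2)
  -- continuity facts
  have hcontWr : ∀ s : ℝ, Continuous fun x => W x ^ s :=
    fun s => (continuous_const.sub hV.continuous).rpow_const fun x => Or.inl (hWpos x).ne'
  have hcontVdw : ∀ w, Continuous fun x => Vd x w :=
    fun w => ((ContinuousLinearMap.apply ℝ ℝ w).continuous).comp hVdc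
  have hcontu'w : ∀ w, Continuous fun x => u' x w := by
    intro w
    have heq3 : (fun x => u' x w) = fun x => (p * W x ^ (p-1)) * (-(Vd x w)) := by
      funext x; simp [hu'def]
    rw [heq3]
    exact (continuous_const.mul (hcontWr _)).mul (hcontVdw w).neg
  have hcontVddw : ∀ w y, Continuous fun x => (Vdd x y) w :=
    fun w y => ((ContinuousLinearMap.apply ℝ ℝ w).continuous).comp
      (((ContinuousLinearMap.apply ℝ (EuclideanSpace ℝ (Fin d) →L[ℝ] ℝ) y).continuous).comp hVddc)
  have hcontu''w : ∀ w y, Continuous fun x => (u'' w x) y := by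
    intro w y
    have heq4 : (fun x => (u'' w x) y) = fun x =>
        (p * W x ^ (p-1)) * (-((Vdd x y) w))
        + (-(Vd x w)) * ((p * ((p-1) * W x ^ (p-2))) * (-(Vd x y))) := by
      funext x
      simp [hu''def, ContinuousLinearMap.add_apply, ContinuousLinearMap.smul_apply,
        ContinuousLinearMap.neg_apply, ContinuousLinearMap.comp_apply,
        ContinuousLinearMap.apply_apply, smul_eq_mul]
    rw [heq4]
    exact ((continuous_const.mul (hcontWr _)).mul (hcontVddw w y).neg).add
      ((hcontVdw w).neg.mul ((continuous_const.mul (continuous_const.mul (hcontWr _))).mul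
        (hcontVdw y).neg))
  have hcontφ : Continuous fun q => ∑ i, (u' q (e i))^2 := by
    apply continuous_finset_sum
    intro i _
    exact (hcontu'w (e i)).pow 2
  have hcontξ : ∀ i, Continuous fun q => (Hf' i q) (e i) := by
    intro i
    have heq5 : (fun q => (Hf' i q) (e i)) = fun q =>
        (2 * W q ^ p) * ((u'' (e i) q) (e i)) + (u' q (e i)) * (2 * (u' q (e i))) := by
      funext q
      simp [hHf'def, ContinuousLinearMap.add_apply, ContinuousLinearMap.smul_apply, smul_eq_mul]
    rw [heq5]
    exact ((continuous_const.mul (hcontWr _)).mul (hcontu''w (e i) (e i))).add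
      ((hcontu'w (e i)).mul (continuous_const.mul (hcontu'w (e i))))
  -- pointwise identities
  have hupos : ∀ q, 0 < u q := fun q => by
    rw [huWq q]; exact Real.rpow_pos_of_pos (hWpos q) _
  have hgradsq : ∀ q, ‖gradient u q‖^2 = ∑ i, (u' q (e i))^2 := by
    intro q
    have hf : fderiv ℝ u q = u' q := (huD q).fderiv
    have hcoord : ∀ i, gradient u q i = u' q (e i) := by
      intro i
      have h1 : (inner ℝ (gradient u q) (e i) : ℝ) = u' q (e i) := by
        unfold gradient
        rw [hf]
        exact InnerProductSpace.toDual_symm_apply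
      have h2 : (inner ℝ (gradient u q) (e i) : ℝ) = gradient u q i := by
        show (inner ℝ (gradient u q) (EuclideanSpace.single i (1:ℝ)) : ℝ) = _
        rw [EuclideanSpace.inner_single_right]
        simp only [one_mul, conj_trivial]
      rw [← h2, h1]
    rw [EuclideanSpace.norm_eq, Real.sq_sqrt (by positivity)]
    exact Finset.sum_congr rfl fun i _ => by rw [Real.norm_eq_abs, sq_abs, hcoord i]
  have hlap : ∀ q, laplacian u q = ∑ i, (u'' (e i) q) (e i) := by
    intro q
    unfold laplacian
    refine Finset.sum_congr rfl fun i _ => ?_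
    have hfe : (fun x => fderiv ℝ u x (EuclideanSpace.single i (1:ℝ))) = fun x => u' x (e i) := by
      funext x
      rw [(huD x).fderiv]
    rw [hfe, (hu''D (e i) q).fderiv]
  have hmain : ∀ q, R q * u q ^ (2*(d:ℝ)/((d:ℝ)-2))
      = (4*((d:ℝ)-1)/((d:ℝ)-2)) * (∑ i, (u' q (e i))^2)
        - (4*((d:ℝ)-1)/((d:ℝ)-2))/2 * (∑ i, (Hf' i q) (e i)) := by
    intro q
    have hsum : (∑ i, (Hf' i q) (e i))
        = 2 * (u q * laplacian u q) + 2 * (∑ i, (u' q (e i))^2) := by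
      have h6 : ∀ i, (Hf' i q) (e i)
          = 2 * (u q * ((u'' (e i) q) (e i))) + 2 * (u' q (e i))^2 := by
        intro i
        have h7 : (Hf' i q) (e i)
            = 2 * W q ^ p * ((u'' (e i) q) (e i)) + (u' q (e i)) * (2 * (u' q (e i))) := by
          simp [hHf'def, ContinuousLinearMap.add_apply, ContinuousLinearMap.smul_apply, smul_eq_mul]
        rw [h7, huWq q]
        ring
      calc (∑ i, (Hf' i q) (e i))
          = ∑ i, (2 * (u q * ((u'' (e i) q) (e i))) + 2 * (u' q (e i))^2) :=
            Finset.sum_congr rfl fun i _ => h6 i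
        _ = 2 * (u q * ∑ i, (u'' (e i) q) (e i)) + 2 * (∑ i, (u' q (e i))^2) := by
            simp only [Finset.mul_sum, Finset.sum_add_distrib]
        _ = 2 * (u q * laplacian u q) + 2 * (∑ i, (u' q (e i))^2) := by rw [hlap q]
    have hexp2 : u q ^ (-(((d:ℝ)+2)/((d:ℝ)-2))) * u q ^ (2*(d:ℝ)/((d:ℝ)-2)) = u q := by
      rw [← Real.rpow_add (hupos q),
        show -(((d:ℝ)+2)/((d:ℝ)-2)) + 2*(d:ℝ)/((d:ℝ)-2) = 1 from by field_simp; ring,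
        Real.rpow_one]
    rw [hR q, hsum]
    linear_combination (-4*((d:ℝ)-1)/((d:ℝ)-2) * laplacian u q) * hexp2
  -- integrability
  have hIball : ∀ (f : EuclideanSpace ℝ (Fin d) → ℝ), Continuous f → ∀ r : ℝ,
      IntegrableOn f (ball (0:EuclideanSpace ℝ (Fin d)) r) volume :=
    fun f hf r => (hf.continuousOn.integrableOn_compact (isCompact_closedBall _ _)).mono_set
      ball_subset_closedBall
  set ω : ℝ := (volume (ball (0:EuclideanSpace ℝ (Fin d)) 1)).toReal with hωdef
  set K : ℝ := 4 * ((d:ℝ) - 1) / ((d:ℝ) - 2) with hKdef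
  have hK0 : 0 ≤ K := by
    rw [hKdef]; exact div_nonneg (by linarith) (by linarith)
  set C : ℝ := (K/2) * (d * (M0 * ω * d * 2 ^ (d+1))) with hCdef
  have hpart1 : ∀ r : ℝ, 1 ≤ r →
      |(∫ q in ball (0:EuclideanSpace ℝ (Fin d)) r, R q * u q ^ (2*(d:ℝ)/((d:ℝ)-2)))
        - K * ∫ q in ball (0:EuclideanSpace ℝ (Fin d)) r, ‖gradient u q‖^2|
      ≤ C * r ^ ((d:ℝ)-1) := by
    intro r hr
    have hr0 : (0:ℝ) < r := lt_of_lt_of_le one_pos hr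
    have hIφ : IntegrableOn (fun q => ∑ i, (u' q (e i))^2)
        (ball (0:EuclideanSpace ℝ (Fin d)) r) volume := hIball _ hcontφ r
    have hIξ : ∀ i, IntegrableOn (fun q => (Hf' i q) (e i))
        (ball (0:EuclideanSpace ℝ (Fin d)) r) volume := fun i => hIball _ (hcontξ i) r
    have hX : (∫ q in ball (0:EuclideanSpace ℝ (Fin d)) r, R q * u q ^ (2*(d:ℝ)/((d:ℝ)-2)))
        = K * (∫ q in ball (0:EuclideanSpace ℝ (Fin d)) r, ∑ i, (u' q (e i))^2)
          - K/2 * ∑ i, ∫ q in ball (0:EuclideanSpace ℝ (Fin d)) r, (Hf' i q) (e i) := by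
      have hcg : (∫ q in ball (0:EuclideanSpace ℝ (Fin d)) r, R q * u q ^ (2*(d:ℝ)/((d:ℝ)-2)))
          = ∫ q in ball (0:EuclideanSpace ℝ (Fin d)) r,
            (K * (∑ i, (u' q (e i))^2) - K/2 * (∑ i, (Hf' i q) (e i))) :=
        setIntegral_congr_fun measurableSet_ball (fun q _ => hmain q)
      have hint1 : IntegrableOn (fun q => K * (∑ i, (u' q (e i))^2))
          (ball (0:EuclideanSpace ℝ (Fin d)) r) volume := hIφ.const_mul _
      have hint2 : IntegrableOn (fun q => K/2 * (∑ i, (Hf' i q) (e i)))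
          (ball (0:EuclideanSpace ℝ (Fin d)) r) volume :=
        (hIball _ (continuous_finset_sum _ fun i _ => hcontξ i) r).const_mul _
      rw [hcg, integral_sub hint1 hint2, integral_const_mul, integral_const_mul,
        integral_finset_sum _ (fun i _ => hIξ i)]
    have hY : (∫ q in ball (0:EuclideanSpace ℝ (Fin d)) r, ‖gradient u q‖^2)
        = ∫ q in ball (0:EuclideanSpace ℝ (Fin d)) r, ∑ i, (u' q (e i))^2 :=
      setIntegral_congr_fun measurableSet_ball (fun q _ => hgradsq q)
    rw [hX, hY]
    have hs1 : K * (∫ q in ball (0:EuclideanSpace ℝ (Fin d)) r, ∑ i, (u' q (e i))^2)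
          - K/2 * (∑ i, ∫ q in ball (0:EuclideanSpace ℝ (Fin d)) r, (Hf' i q) (e i))
          - K * (∫ q in ball (0:EuclideanSpace ℝ (Fin d)) r, ∑ i, (u' q (e i))^2)
        = -(K/2 * (∑ i, ∫ q in ball (0:EuclideanSpace ℝ (Fin d)) r, (Hf' i q) (e i))) := by
      ring
    rw [hs1, abs_neg, abs_mul, abs_of_nonneg (by linarith : (0:ℝ) ≤ K/2)]
    have hkey : ∀ i, |∫ q in ball (0:EuclideanSpace ℝ (Fin d)) r, (Hf' i q) (e i)|
        ≤ M0 * ω * d * 2 ^ (d+1) * r ^ (d-1) := fun i =>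
      aux_key hd1 (e i) (he i) (Hf i) (Hf' i) (hHfD i) M0 M1 (hHfb i) (hHf'b i) r hr
    have habs : |∑ i, ∫ q in ball (0:EuclideanSpace ℝ (Fin d)) r, (Hf' i q) (e i)|
        ≤ d * (M0 * ω * d * 2 ^ (d+1) * r ^ (d-1)) := by
      refine (Finset.abs_sum_le_sum_abs _ _).trans ?_
      calc (∑ i, |∫ q in ball (0:EuclideanSpace ℝ (Fin d)) r, (Hf' i q) (e i)|)
          ≤ ∑ _i : Fin d, M0 * ω * d * 2 ^ (d+1) * r ^ (d-1) :=
            Finset.sum_le_sum fun i _ => hkey i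
        _ = d * (M0 * ω * d * 2 ^ (d+1) * r ^ (d-1)) := by
            rw [Finset.sum_const, Finset.card_univ, Fintype.card_fin, nsmul_eq_mul]
    have hrpoweq : r ^ ((d:ℝ)-1) = r ^ (d-1:ℕ) := by
      rw [← Real.rpow_natCast r (d-1)]
      congr 1
      rw [Nat.cast_sub hd1, Nat.cast_one]
    rw [hrpoweq, hCdef]
    refine le_trans (mul_le_mul_of_nonneg_left habs (by linarith)) (le_of_eq (by ring))
  constructor
  · exact ⟨C, fun r hr => hpart1 r hr⟩
  · -- liminf part
    have hflow : ∀ r : ℝ, 1 ≤ r → -C * r⁻¹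
        ≤ r ^ (-(d:ℝ)) * ∫ q in ball (0:EuclideanSpace ℝ (Fin d)) r,
          R q * u q ^ (2*(d:ℝ)/((d:ℝ)-2)) := by
      intro r hr
      have hr0 : (0:ℝ) < r := lt_of_lt_of_le one_pos hr
      have h1 := hpart1 r hr
      have hY0 : 0 ≤ ∫ q in ball (0:EuclideanSpace ℝ (Fin d)) r, ‖gradient u q‖^2 :=
        integral_nonneg fun q => by positivity
      have hXlow : -(C * r ^ ((d:ℝ)-1))
          ≤ ∫ q in ball (0:EuclideanSpace ℝ (Fin d)) r, R q * u q ^ (2*(d:ℝ)/((d:ℝ)-2)) := by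
        have h2 := (abs_le.mp h1).1
        nlinarith [mul_nonneg hK0 hY0]
      have hrd : (0:ℝ) < r ^ (-(d:ℝ)) := Real.rpow_pos_of_pos hr0 _
      have h2 := mul_le_mul_of_nonneg_left hXlow hrd.le
      have hmerge : r ^ (-(d:ℝ)) * r ^ ((d:ℝ)-1) = r⁻¹ := by
        rw [← Real.rpow_add hr0, show -(d:ℝ) + ((d:ℝ)-1) = -1 from by ring, Real.rpow_neg_one]
      have h3 : r ^ (-(d:ℝ)) * (-(C * r ^ ((d:ℝ)-1))) = -C * r⁻¹ := by
        calc r ^ (-(d:ℝ)) * (-(C * r ^ ((d:ℝ)-1)))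
            = -C * (r ^ (-(d:ℝ)) * r ^ ((d:ℝ)-1)) := by ring
          _ = -C * r⁻¹ := by rw [hmerge]
      rw [h3] at h2
      exact h2
    have hev : ∀ᶠ r in (atTop : Filter ℝ), -C * r⁻¹
        ≤ r ^ (-(d:ℝ)) * ∫ q in ball (0:EuclideanSpace ℝ (Fin d)) r,
          R q * u q ^ (2*(d:ℝ)/((d:ℝ)-2)) :=
      eventually_atTop.mpr ⟨1, fun r hr => hflow r hr⟩
    have htend : Tendsto (fun r : ℝ => -C * r⁻¹) atTop (𝓝 0) := by
      have := tendsto_inv_atTop_zero (𝕜 := ℝ)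
      simpa using this.const_mul (-C)
    rw [liminf_eq]
    by_cases hbdd : BddAbove {a : ℝ | ∀ᶠ x in (atTop : Filter ℝ),
        a ≤ x ^ (-(d:ℝ)) * ∫ q in ball (0:EuclideanSpace ℝ (Fin d)) x,
          R q * u q ^ (2*(d:ℝ)/((d:ℝ)-2))}
    · by_contra hneg
      push_neg at hneg
      set S := {a : ℝ | ∀ᶠ x in (atTop : Filter ℝ),
        a ≤ x ^ (-(d:ℝ)) * ∫ q in ball (0:EuclideanSpace ℝ (Fin d)) x,
          R q * u q ^ (2*(d:ℝ)/((d:ℝ)-2))} with hSdef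
      have h1 : (sSup S / 2 : ℝ) < 0 := by
        have := hneg; linarith [hneg]
      have h2 : ∀ᶠ x in (atTop : Filter ℝ), sSup S / 2 ≤ -C * x⁻¹ :=
        htend.eventually (eventually_ge_nhds h1)
      have hmem : sSup S / 2 ∈ S := by
        rw [hSdef]
        filter_upwards [h2, hev] with x hx1 hx2 using hx1.trans hx2
      have := le_csSup hbdd hmem
      linarith
    · rw [Real.sSup_of_not_bddAbove hbdd]
end

section
/- Let Φ be a measurable flow on a measure space (Σ, μ) preserving μ, and v : Σ → ℝ^d a measurable Φ-invariant function (v∘Φᵗ = v). Suppose there is a measurable involution R : Σ → Σ with μ∘R = μ, R∘Φᵗ = Φ⁻ᵗ∘R, and v∘R = -v. If μ({x : v(x) ≠ 0}) > 0, then there exists a unit vector s ∈ S^{d-1} such that B_s := {x : ⟨v(x), s⟩ > 0} and B_{-s} are disjoint Φ-invariant sets of equal positive measure; in particular Φ is not ergodic. -/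
open Real Filter MeasureTheory RealInnerProductSpace

/-- A flow-invariant "asymptotic velocity" `v` which is odd under a
time-reversing measure-preserving involution `R` and nonzero on a set of positive
measure yields disjoint invariant sets `B_s`, `B_{-s}` of equal positive measure;
in particular the flow is not ergodic. -/
theorem stmt17 {d : ℕ} {X : Type*} [MeasurableSpace X]
    (μ : Measure X)
    (Φ : ℝ → X → X)
    (hΦ : ∀ t, MeasurePreserving (Φ t) μ μ)
    (hΦgrp : ∀ s t x, Φ s (Φ t x) = Φ (s + t) x)
    (hΦ0 : ∀ x, Φ 0 x = x)
    (v : X → EuclideanSpace ℝ (Fin d)) (hv : Measurable v)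
    (hvinv : ∀ t x, v (Φ t x) = v x)
    (R : X → X) (hR : Function.Involutive R)
    (hRμ : MeasurePreserving R μ μ)
    (hRΦ : ∀ t x, R (Φ t x) = Φ (-t) (R x))
    (hvR : ∀ x, v (R x) = -v x)
    (hpos : 0 < μ {x | v x ≠ 0}) :
    ∃ s : EuclideanSpace ℝ (Fin d), ‖s‖ = 1 ∧
      Disjoint {x | 0 < ⟪v x, s⟫} {x | 0 < ⟪v x, -s⟫} ∧
      (∀ t, Φ t ⁻¹' {x | 0 < ⟪v x, s⟫} = {x | 0 < ⟪v x, s⟫}) ∧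
      (∀ t, Φ t ⁻¹' {x | 0 < ⟪v x, -s⟫} = {x | 0 < ⟪v x, -s⟫}) ∧
      μ {x | 0 < ⟪v x, s⟫} = μ {x | 0 < ⟪v x, -s⟫} ∧
      0 < μ {x | 0 < ⟪v x, s⟫} ∧
      ¬ (∀ A : Set X, MeasurableSet A → (∀ t, Φ t ⁻¹' A = A) →
          μ A = 0 ∨ μ Aᶜ = 0) := by
  classical
  -- candidate directions: ± coordinate vectors
  set e : Fin d → Bool → EuclideanSpace ℝ (Fin d) :=
    fun i b => (if b then (1:ℝ) else -1) • EuclideanSpace.single i (1:ℝ) with he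
  have hnorm : ∀ i b, ‖e i b‖ = 1 := by
    intro i b
    simp only [he, norm_smul, EuclideanSpace.norm_single, norm_one, mul_one]
    cases b <;> simp
  have hcover : {x | v x ≠ 0} ⊆ ⋃ (i : Fin d) (b : Bool), {x | 0 < ⟪v x, e i b⟫} := by
    intro x hx
    have : ∃ i, v x i ≠ 0 := by
      by_contra h
      push_neg at h
      exact hx (by ext i; exact h i)
    obtain ⟨i, hi⟩ := this
    have hinner : ∀ b : Bool, ⟪v x, e i b⟫ = (if b then (1:ℝ) else -1) * v x i := by
      intro b
      simp only [he, inner_smul_right, EuclideanSpace.inner_single_right]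
      simp
    rcases lt_or_gt_of_ne hi with h | h
    · refine Set.mem_iUnion.2 ⟨i, Set.mem_iUnion.2 ⟨false, ?_⟩⟩
      simp only [Set.mem_setOf_eq, hinner]
      simpa using h
    · refine Set.mem_iUnion.2 ⟨i, Set.mem_iUnion.2 ⟨true, ?_⟩⟩
      simp only [Set.mem_setOf_eq, hinner]
      simpa using h
  -- some direction has positive measure
  have hex : ∃ i b, 0 < μ {x | 0 < ⟪v x, e i b⟫} := by
    by_contra h
    push_neg at h
    have h0 : μ (⋃ (i : Fin d) (b : Bool), {x | 0 < ⟪v x, e i b⟫}) = 0 := by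
      refine measure_iUnion_null fun i => measure_iUnion_null fun b => ?_
      exact le_antisymm (h i b) zero_le
    exact absurd (measure_mono_null hcover h0) (by exact hpos.ne')
  obtain ⟨i, b, hμs⟩ := hex
  set s := e i b with hs
  refine ⟨s, hnorm i b, ?_, ?_, ?_, ?_, hμs, ?_⟩
  · -- disjoint
    rw [Set.disjoint_left]
    intro x hx hx'
    simp only [Set.mem_setOf_eq, inner_neg_right] at hx hx'
    linarith
  · intro t; ext x; simp [Set.mem_preimage, hvinv]
  · intro t; ext x; simp [Set.mem_preimage, hvinv]
  · -- equal measures via R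
    have hpre : R ⁻¹' {x | 0 < ⟪v x, -s⟫} = {x | 0 < ⟪v x, s⟫} := by
      ext x
      simp only [Set.mem_preimage, Set.mem_setOf_eq, hvR, inner_neg_right, inner_neg_left,
        neg_neg]
    have hmeas : MeasurableSet {x | 0 < ⟪v x, -s⟫} :=
      measurableSet_lt measurable_const (hv.inner measurable_const)
    calc μ {x | 0 < ⟪v x, s⟫} = μ (R ⁻¹' {x | 0 < ⟪v x, -s⟫}) := by rw [hpre]
      _ = μ {x | 0 < ⟪v x, -s⟫} := hRμ.measure_preimage hmeas.nullMeasurableSet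
  · -- not ergodic
    intro H
    have hmeasS : MeasurableSet {x | 0 < ⟪v x, s⟫} :=
      measurableSet_lt measurable_const (hv.inner measurable_const)
    have hinv : ∀ t, Φ t ⁻¹' {x | 0 < ⟪v x, s⟫} = {x | 0 < ⟪v x, s⟫} := by
      intro t; ext x; simp [Set.mem_preimage, hvinv]
    rcases H _ hmeasS hinv with h0 | hc
    · exact absurd h0 hμs.ne'
    · -- B_{-s} ⊆ complement, and μ B_{-s} = μ B_s > 0
      have hpre : R ⁻¹' {x | 0 < ⟪v x, -s⟫} = {x | 0 < ⟪v x, s⟫} := by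
        ext x
        simp only [Set.mem_preimage, Set.mem_setOf_eq, hvR, inner_neg_right, inner_neg_left,
          neg_neg]
      have hmeas : MeasurableSet {x | 0 < ⟪v x, -s⟫} :=
        measurableSet_lt measurable_const (hv.inner measurable_const)
      have heq : μ {x | 0 < ⟪v x, s⟫} = μ {x | 0 < ⟪v x, -s⟫} := by
        calc μ {x | 0 < ⟪v x, s⟫} = μ (R ⁻¹' {x | 0 < ⟪v x, -s⟫}) := by rw [hpre]
          _ = μ {x | 0 < ⟪v x, -s⟫} := hRμ.measure_preimage hmeas.nullMeasurableSet
      have hsub : {x | 0 < ⟪v x, -s⟫} ⊆ {x | 0 < ⟪v x, s⟫}ᶜ := by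
        intro x hx
        simp only [Set.mem_setOf_eq, inner_neg_right] at hx
        simp only [Set.mem_compl_iff, Set.mem_setOf_eq, not_lt]
        linarith
      have : μ {x | 0 < ⟪v x, -s⟫} = 0 := measure_mono_null hsub hc
      rw [heq, this] at hμs
      exact lt_irrefl _ hμs
end

section
/- Let ℒ = ℤ^d, J a finite set, Ω = J^ℒ, β a shift-invariant probability measure on Ω with β({ω₀}) = 0 for the constant configuration ω₀ ≡ 0. For q ∈ ℝ^d, angle φ ∈ (0, π], and unit vector x, let Δ_q^φ(x) := {ℓ ∈ ℒ : angle between x and ℓ - q is < φ} be the lattice points in the Euclidean cone. Then β-almost surely there is no triple (q, φ, x) with ω(ℓ) = 0 for all ℓ ∈ Δ_q^φ(x); i.e. β({ω : ∃(q,φ,x), ω(Δ_q^φ(x)) = {0}}) = 0. -/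
open Real Filter MeasureTheory InnerProductGeometry
open scoped RealInnerProductSpace

section aux




variable {E : Type*} [NormedAddCommGroup E] [InnerProductSpace ℝ E]

lemma angle_lt_of_inner {v u : E} {φ : ℝ} (hv : ‖v‖ = 1) (hφ1 : 0 ≤ φ) (hφ2 : φ ≤ π)
    (h : Real.cos φ * ‖u‖ < ⟪v, u⟫) : angle v u < φ := by
  have hu : u ≠ 0 := by
    rintro rfl
    simp at h
  have hun : 0 < ‖u‖ := norm_pos_iff.mpr hu
  by_contra hcon
  push_neg at hcon
  have h1 : Real.cos (angle v u) ≤ Real.cos φ :=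
    Real.cos_le_cos_of_nonneg_of_le_pi hφ1 (angle_le_pi v u) hcon
  rw [cos_angle, hv, one_mul] at h1
  have := (div_le_iff₀ hun).mp h1
  linarith

lemma inner_lt_of_angle {v u : E} {φ : ℝ} (hv : ‖v‖ = 1) (hφ2 : φ ≤ π) (hu : u ≠ 0)
    (h : angle v u < φ) : Real.cos φ * ‖u‖ < ⟪v, u⟫ := by
  have hun : 0 < ‖u‖ := norm_pos_iff.mpr hu
  have h1 : Real.cos φ < Real.cos (angle v u) :=
    Real.cos_lt_cos_of_nonneg_of_le_pi (angle_nonneg v u) hφ2 h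
  rw [cos_angle, hv, one_mul] at h1
  have := (lt_div_iff₀ hun).mp h1
  linarith

lemma angle_add_smul_lt {v w : E} {φ t : ℝ} (hv : ‖v‖ = 1) (hφ1 : 0 < φ) (hφ2 : φ ≤ π)
    (ht : 0 < t) (h : angle v w < φ) : angle v (w + t • v) < φ := by
  have hv0 : v ≠ 0 := by intro h0; rw [h0] at hv; simp at hv
  by_cases hw : w = 0
  · subst hw
    rw [zero_add, angle_smul_right_of_pos _ _ ht, angle_self hv0]
    exact hφ1
  · have h2 := inner_lt_of_angle hv hφ2 hw h
    apply angle_lt_of_inner hv hφ1.le hφ2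
    have hiv : ⟪v, w + t • v⟫ = ⟪v, w⟫ + t := by
      rw [inner_add_right, real_inner_smul_right, real_inner_self_eq_norm_sq, hv]
      ring
    rw [hiv]
    have hn1 : ‖w + t • v‖ ≤ ‖w‖ + t := by
      calc ‖w + t • v‖ ≤ ‖w‖ + ‖t • v‖ := norm_add_le _ _
      _ = ‖w‖ + t := by rw [norm_smul, hv, Real.norm_eq_abs, abs_of_pos ht, mul_one]
    have hn2 : ‖w‖ ≤ ‖w + t • v‖ + t := by
      calc ‖w‖ = ‖w + t • v - t • v‖ := by rw [add_sub_cancel_right]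
      _ ≤ ‖w + t • v‖ + ‖t • v‖ := norm_sub_le _ _
      _ = ‖w + t • v‖ + t := by rw [norm_smul, hv, Real.norm_eq_abs, abs_of_pos ht, mul_one]
    have hc1 : -1 ≤ Real.cos φ := Real.neg_one_le_cos φ
    have hc2 : Real.cos φ ≤ 1 := Real.cos_le_one φ
    rcases le_total 0 (Real.cos φ) with hc | hc
    · nlinarith
    · nlinarith

lemma exists_shift_angle_lt {v : E} (hv : ‖v‖ = 1) {φ T : ℝ}
    (hφ1 : 0 < φ) (hφ2 : φ ≤ π) (hT : 0 < T) (w : E) :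
    ∃ n : ℕ, angle v (w + ((n : ℝ) * T) • v) < φ := by
  have hcos1 : Real.cos φ < 1 := by
    have := Real.cos_lt_cos_of_nonneg_of_le_pi le_rfl hφ2 hφ1
    rwa [Real.cos_zero] at this
  have hiw : |⟪v, w⟫| ≤ ‖w‖ := by
    have := abs_real_inner_le_norm v w
    rwa [hv, one_mul] at this
  obtain ⟨n, hn⟩ := exists_nat_gt
    (max (‖w‖ / T) ((Real.cos φ * ‖w‖ - ⟪v, w⟫) / (T * (1 - Real.cos φ))))
  refine ⟨n, angle_lt_of_inner hv hφ1.le hφ2 ?_⟩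
  set s : ℝ := (n : ℝ) * T with hs
  have hs1 : ‖w‖ / T < n := lt_of_le_of_lt (le_max_left _ _) hn
  have hs2 : (Real.cos φ * ‖w‖ - ⟪v, w⟫) / (T * (1 - Real.cos φ)) < n :=
    lt_of_le_of_lt (le_max_right _ _) hn
  have hsw : ‖w‖ < s := by rw [hs]; exact (div_lt_iff₀ hT).mp hs1
  have hskey : Real.cos φ * ‖w‖ - ⟪v, w⟫ < s * (1 - Real.cos φ) := by
    have := (div_lt_iff₀ (by nlinarith : (0:ℝ) < T * (1 - Real.cos φ))).mp hs2
    rw [hs]; nlinarith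
  have hiv : ⟪v, w + s • v⟫ = ⟪v, w⟫ + s := by
    rw [inner_add_right, real_inner_smul_right, real_inner_self_eq_norm_sq, hv]
    ring
  rw [hiv]
  have hsnn : 0 ≤ s := by positivity
  have hn1 : ‖w + s • v‖ ≤ ‖w‖ + s := by
    calc ‖w + s • v‖ ≤ ‖w‖ + ‖s • v‖ := norm_add_le _ _
    _ = ‖w‖ + s := by rw [norm_smul, hv, Real.norm_eq_abs, abs_of_nonneg hsnn, mul_one]
  rcases le_total 0 (Real.cos φ) with hc | hc
  · nlinarith
  · nlinarith [norm_nonneg (w + s • v), abs_le.mp hiw]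



variable {E : Type*} [NormedAddCommGroup E] [InnerProductSpace ℝ E]
lemma cone_in_cone {x v q q' u : E} {φ φ'' : ℝ} (hx : ‖x‖ = 1) (hv : ‖v‖ = 1)
    (hφ1 : 0 < φ) (hφ2 : φ ≤ π)
    (hvx : ‖v - x‖ < min (Real.cos (min φ (π/2)/2) - Real.cos (min φ (π/2)))
      ((1 - Real.cos (min φ (π/2)))/4))
    (hq' : ‖q' - (q + v)‖ < min (Real.cos (min φ (π/2)/2) - Real.cos (min φ (π/2)))
      ((1 - Real.cos (min φ (π/2)))/4))
    (hφ''1 : 0 < φ'') (hφ''2 : φ'' ≤ min φ (π/2)/2)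
    (h : angle v (u - q') < φ'') : angle x (u - q) < φ := by
  have hπ := Real.pi_pos
  set φ₀ := min φ (π/2) with hφ₀
  have hφ₀0 : 0 < φ₀ := lt_min hφ1 (by linarith)
  have hφ₀π2 : φ₀ ≤ π/2 := min_le_right _ _
  have hφ₀φ : φ₀ ≤ φ := min_le_left _ _
  have hφ₀π : φ₀ ≤ π := by linarith
  set c₀ := Real.cos φ₀ with hc₀
  set ch := Real.cos (φ₀/2) with hch
  have hc₀0 : 0 ≤ c₀ := Real.cos_nonneg_of_mem_Icc ⟨by linarith, hφ₀π2⟩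
  have hchc₀ : c₀ < ch := Real.cos_lt_cos_of_nonneg_of_le_pi (by linarith) hφ₀π (by linarith)
  have hc₀1 : c₀ < 1 := by
    have := Real.cos_lt_cos_of_nonneg_of_le_pi le_rfl hφ₀π hφ₀0
    rwa [Real.cos_zero] at this
  set δ := min (ch - c₀) ((1 - c₀)/4) with hδ
  have hδ0 : 0 < δ := lt_min (by linarith) (by linarith)
  have hδa : δ ≤ ch - c₀ := min_le_left _ _
  have hδb : δ ≤ (1 - c₀)/4 := min_le_right _ _
  set w' := u - q' with hw'
  have hw'0 : w' ≠ 0 := by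
    intro h0
    rw [h0, angle_zero_right] at h
    linarith
  have hφ''π : φ'' ≤ π := by linarith
  have h2 : Real.cos φ'' * ‖w'‖ < ⟪v, w'⟫ := inner_lt_of_angle hv hφ''π hw'0 h
  have hch'' : ch ≤ Real.cos φ'' :=
    Real.cos_le_cos_of_nonneg_of_le_pi hφ''1.le (by linarith) hφ''2
  have hkey : ch * ‖w'‖ < ⟪v, w'⟫ :=
    lt_of_le_of_lt (mul_le_mul_of_nonneg_right hch'' (norm_nonneg _)) h2
  set e := q' - q - v with he
  have hne : ‖e‖ < δ := by
    have : e = q' - (q + v) := by rw [he]; abel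
    rwa [this]
  have hdec : u - q = w' + v + e := by rw [hw', he]; abel
  have hinner : ⟪x, u - q⟫ = ⟪v, w'⟫ + 1 + ⟪v, e⟫ + ⟪x - v, u - q⟫ := by
    have h1 : ⟪x - v, u - q⟫ = ⟪x, u - q⟫ - ⟪v, u - q⟫ := by rw [inner_sub_left]
    have h2 : ⟪v, u - q⟫ = ⟪v, w'⟫ + 1 + ⟪v, e⟫ := by
      rw [hdec, inner_add_right, inner_add_right, real_inner_self_eq_norm_sq, hv]
      ring
    linarith
  have hb1 : -‖e‖ ≤ ⟪v, e⟫ := by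
    have := abs_real_inner_le_norm v e
    rw [hv, one_mul] at this
    linarith [neg_abs_le (⟪v, e⟫)]
  have hb2 : -(‖v - x‖ * ‖u - q‖) ≤ ⟪x - v, u - q⟫ := by
    have h3 := abs_real_inner_le_norm (x - v) (u - q)
    have h4 : ‖x - v‖ = ‖v - x‖ := norm_sub_rev _ _
    rw [h4] at h3
    linarith [neg_abs_le (⟪x - v, u - q⟫)]
  have hnorm : ‖u - q‖ ≤ ‖w'‖ + 1 + ‖e‖ := by
    rw [hdec]
    calc ‖w' + v + e‖ ≤ ‖w' + v‖ + ‖e‖ := norm_add_le _ _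
    _ ≤ ‖w'‖ + ‖v‖ + ‖e‖ := by linarith [norm_add_le w' v]
    _ = ‖w'‖ + 1 + ‖e‖ := by rw [hv]
  have hgoal : c₀ * ‖u - q‖ < ⟪x, u - q⟫ := by
    have hp1 : ‖v - x‖ * ‖u - q‖ ≤ δ * (‖w'‖ + 1 + ‖e‖) :=
      mul_le_mul hvx.le hnorm (norm_nonneg _) hδ0.le
    have hp2 : c₀ * ‖u - q‖ ≤ c₀ * (‖w'‖ + 1 + ‖e‖) :=
      mul_le_mul_of_nonneg_left hnorm hc₀0
    have hδch : c₀ + δ ≤ ch := by linarith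
    have hterm : (c₀ + δ) * ‖w'‖ ≤ ch * ‖w'‖ :=
      mul_le_mul_of_nonneg_right hδch (norm_nonneg _)
    have hδ14 : δ ≤ 1/4 := by linarith
    have hbδ : ‖e‖ ≤ δ := hne.le
    have hδb2 : δ * ‖e‖ ≤ δ * δ := mul_le_mul_of_nonneg_left hbδ hδ0.le
    have hcb : c₀ * ‖e‖ ≤ c₀ * δ := mul_le_mul_of_nonneg_left hbδ hc₀0
    nlinarith [norm_nonneg w', norm_nonneg e, norm_nonneg (u - q)]
  exact lt_of_lt_of_le (angle_lt_of_inner hx hφ₀0.le hφ₀π hgoal) hφ₀φ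




def satSpace (ι J : Type*) [MeasurableSpace J] : MeasurableSpace (ι → J) where
  MeasurableSet' B := ∀ ω ω' : ι → J,
    (∀ i (M : Set J), MeasurableSet M → (ω i ∈ M ↔ ω' i ∈ M)) → (ω ∈ B ↔ ω' ∈ B)
  measurableSet_empty := fun _ _ _ => Iff.rfl
  measurableSet_compl := fun B hB ω ω' h => not_congr (hB ω ω' h)
  measurableSet_iUnion := fun f hf ω ω' h => by
    simp only [Set.mem_iUnion]
    exact exists_congr fun n => hf n ω ω' h

lemma measurableSet_saturated {ι J : Type*} [MeasurableSpace J] {B : Set (ι → J)}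
    (hB : MeasurableSet B) {ω ω' : ι → J}
    (h : ∀ i (M : Set J), MeasurableSet M → (ω i ∈ M ↔ ω' i ∈ M)) : ω ∈ B ↔ ω' ∈ B := by
  have hev : ∀ i, @Measurable _ _ (satSpace ι J) _ (fun ω : ι → J => ω i) :=
    fun i M hM ω₁ ω₂ hh => hh i M hM
  have hid : @Measurable _ _ (satSpace ι J) MeasurableSpace.pi (fun ω : ι → J => ω) :=
    @measurable_pi_lambda _ _ _ (satSpace ι J) _ _ hev
  have hle : (MeasurableSpace.pi : MeasurableSpace (ι → J)) ≤ satSpace ι J := by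
    have := measurable_iff_comap_le.mp hid
    rwa [show (fun ω : ι → J => ω) = id from rfl, MeasurableSpace.comap_id] at this
  exact hle _ hB ω ω' h


noncomputable def latE {d : ℕ} (m : Fin d → ℤ) : EuclideanSpace ℝ (Fin d) :=
  (WithLp.equiv 2 (Fin d → ℝ)).symm fun i => (m i : ℝ)

noncomputable def ratE {d : ℕ} (r : Fin d → ℚ) : EuclideanSpace ℝ (Fin d) :=
  (WithLp.equiv 2 (Fin d → ℝ)).symm fun i => (r i : ℝ)

lemma latE_apply {d : ℕ} (m : Fin d → ℤ) (i : Fin d) : latE m i = (m i : ℝ) := rfl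

lemma ratE_apply {d : ℕ} (r : Fin d → ℚ) (i : Fin d) : ratE r i = (r i : ℝ) := rfl

lemma euclid_norm_le {d : ℕ} (w : EuclideanSpace ℝ (Fin d)) (c : ℝ) (hc : 0 ≤ c)
    (h : ∀ i, |w i| ≤ c) : ‖w‖ ≤ Real.sqrt d * c := by
  rw [EuclideanSpace.norm_eq]
  have h1 : ∑ i, ‖w i‖ ^ 2 ≤ (d : ℝ) * c ^ 2 := by
    calc ∑ i, ‖w i‖ ^ 2 ≤ ∑ _i : Fin d, c ^ 2 := by
          apply Finset.sum_le_sum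
          intro i _
          rw [Real.norm_eq_abs]
          exact pow_le_pow_left₀ (abs_nonneg _) (h i) 2
    _ = (d : ℝ) * c ^ 2 := by simp [Finset.sum_const, Finset.card_univ]
  calc Real.sqrt (∑ i, ‖w i‖ ^ 2) ≤ Real.sqrt ((d : ℝ) * c ^ 2) := Real.sqrt_le_sqrt h1
  _ = Real.sqrt d * c := by
      rw [Real.sqrt_mul (Nat.cast_nonneg d), Real.sqrt_sq hc]

lemma exists_lattice_close {d : ℕ} (y : EuclideanSpace ℝ (Fin d)) {ε : ℝ} (hε : 0 < ε) :
    ∃ (m : Fin d → ℤ) (N : ℕ), 0 < N ∧ ‖((N : ℝ)⁻¹ • latE m) - y‖ < ε := by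
  obtain ⟨N, hN⟩ := exists_nat_gt (Real.sqrt d / ε)
  have hN0 : 0 < (N : ℝ) := lt_of_le_of_lt (div_nonneg (Real.sqrt_nonneg _) hε.le) hN
  refine ⟨fun i => ⌊y i * N⌋, N, by exact_mod_cast hN0, ?_⟩
  have hbound : ∀ i, |(((N : ℝ)⁻¹ • latE fun j => ⌊y j * N⌋) - y) i| ≤ (N : ℝ)⁻¹ := by
    intro i
    have h1 : (((N : ℝ)⁻¹ • latE fun j => ⌊y j * N⌋) - y) i
        = (N : ℝ)⁻¹ * ((⌊y i * N⌋ : ℝ) - y i * N) := by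
      have : (((N : ℝ)⁻¹ • latE fun j => ⌊y j * N⌋) - y) i
          = (N : ℝ)⁻¹ * (⌊y i * N⌋ : ℝ) - y i := by
        simp [latE_apply]
      rw [this]
      field_simp
    rw [h1, abs_mul, abs_of_pos (inv_pos.mpr hN0)]
    have h2 : (⌊y i * N⌋ : ℝ) ≤ y i * N := Int.floor_le _
    have h3 : y i * N - 1 < (⌊y i * N⌋ : ℝ) := by
      have := Int.lt_floor_add_one (y i * N)
      linarith
    have h4 : |(⌊y i * N⌋ : ℝ) - y i * N| ≤ 1 := abs_le.mpr ⟨by linarith, by linarith⟩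
    calc (N : ℝ)⁻¹ * |(⌊y i * N⌋ : ℝ) - y i * N| ≤ (N : ℝ)⁻¹ * 1 :=
          mul_le_mul_of_nonneg_left h4 (inv_pos.mpr hN0).le
    _ = (N : ℝ)⁻¹ := mul_one _
  have := euclid_norm_le _ _ (inv_pos.mpr hN0).le hbound
  have hlt : Real.sqrt d * (N : ℝ)⁻¹ < ε := by
    rw [div_lt_iff₀ hε] at hN
    rw [mul_inv_lt_iff₀ hN0]
    linarith
  linarith

lemma exists_rat_close {d : ℕ} (y : EuclideanSpace ℝ (Fin d)) {ε : ℝ} (hε : 0 < ε) :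
    ∃ r : Fin d → ℚ, ‖ratE r - y‖ < ε := by
  have hd : 0 < Real.sqrt d + 1 := by positivity
  have hε' : 0 < ε / (Real.sqrt d + 1) := by positivity
  have hch : ∀ i : Fin d, ∃ q : ℚ, |y i - q| < ε / (Real.sqrt d + 1) := fun i =>
    exists_rat_near (y i) hε'
  choose r hr using hch
  refine ⟨r, ?_⟩
  have hbound : ∀ i, |(ratE r - y) i| ≤ ε / (Real.sqrt d + 1) := by
    intro i
    have h1 : (ratE r - y) i = (r i : ℝ) - y i := by simp [ratE_apply]
    rw [h1, abs_sub_comm]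
    exact (hr i).le
  have := euclid_norm_le _ _ hε'.le hbound
  have hlt : Real.sqrt d * (ε / (Real.sqrt d + 1)) < ε := by
    rw [mul_div_assoc']
    rw [div_lt_iff₀ hd]
    nlinarith [Real.sqrt_nonneg (d : ℝ)]
  linarith

variable {E : Type*} [NormedAddCommGroup E] [InnerProductSpace ℝ E]

lemma unit_close {x y : E} (hx : ‖x‖ = 1) (hy : y ≠ 0) :
    ‖‖y‖⁻¹ • y - x‖ ≤ 2 * ‖y - x‖ := by
  have hy0 : 0 < ‖y‖ := norm_pos_iff.mpr hy
  have h1 : ‖y‖⁻¹ • y - x = (‖y‖⁻¹ - 1) • y + (y - x) := by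
    rw [sub_smul, one_smul]; abel
  have h2 : ‖(‖y‖⁻¹ - 1) • y‖ = |1 - ‖y‖| := by
    rw [norm_smul, Real.norm_eq_abs]
    rw [show (‖y‖⁻¹ - 1) = (1 - ‖y‖) / ‖y‖ by field_simp, abs_div, abs_of_pos hy0]
    field_simp
  have h3 : |1 - ‖y‖| ≤ ‖y - x‖ := by
    have := abs_norm_sub_norm_le y x
    rw [hx] at this
    rwa [abs_sub_comm]
  calc ‖‖y‖⁻¹ • y - x‖ ≤ ‖(‖y‖⁻¹ - 1) • y‖ + ‖y - x‖ := by rw [h1]; exact norm_add_le _ _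
  _ ≤ 2 * ‖y - x‖ := by rw [h2]; linarith
lemma latE_add {d : ℕ} (a b : Fin d → ℤ) : latE (a + b) = latE a + latE b := by
  ext i
  simp [latE_apply]

lemma latE_zsmul {d : ℕ} (n : ℤ) (m : Fin d → ℤ) : latE (n • m) = (n : ℝ) • latE m := by
  ext i
  have h2 : ((n : ℝ) • latE m) i = (n : ℝ) * (m i : ℝ) := rfl
  show ((n • m i : ℤ) : ℝ) = ((n : ℝ) • latE m) i
  rw [h2, smul_eq_mul]
  push_cast
  ring

lemma latE_eq_zero {d : ℕ} {m : Fin d → ℤ} (h : latE m = 0) : m = 0 := by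
  funext i
  have := congrFun (congrArg (fun (w : EuclideanSpace ℝ (Fin d)) => (w : Fin d → ℝ)) h) i
  simp [latE_apply] at this
  exact_mod_cast this

end aux

/-- For a shift-invariant probability measure on `Ω = J^{ℤ^d}`
giving measure zero to the constant-`0` configuration, almost surely there is no
Euclidean cone all of whose lattice points carry the trivial single site
potential. -/
theorem stmt18 {d : ℕ} (J : Type*) [Fintype J] [MeasurableSpace J] (z : J)
    (β : Measure ((Fin d → ℤ) → J)) [IsProbabilityMeasure β]
    (θ : (Fin d → ℤ) → ((Fin d → ℤ) → J) → ((Fin d → ℤ) → J))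
    (hθ : ∀ ℓ ω ℓ', θ ℓ ω ℓ' = ω (ℓ' + ℓ))
    (hinv : ∀ ℓ, MeasurePreserving (θ ℓ) β β)
    (hzero : β {fun _ => z} = 0) :
    β {ω | ∃ (q x : EuclideanSpace ℝ (Fin d)) (φ : ℝ),
        0 < φ ∧ φ ≤ Real.pi ∧ ‖x‖ = 1 ∧
        ∀ ℓ : Fin d → ℤ,
          InnerProductGeometry.angle x
            ((WithLp.equiv 2 (Fin d → ℝ)).symm (fun i => (ℓ i : ℝ)) - q) < φ →
          ω ℓ = z} = 0 := by
  classical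
  set K : Set J := ⋂₀ {M : Set J | MeasurableSet M ∧ z ∈ M} with hKdef
  have hKmeas : MeasurableSet K := by
    apply MeasurableSet.sInter (Set.to_countable _)
    intro M hM; exact hM.1
  have hzK : z ∈ K := Set.mem_sInter.mpr fun M hM => hM.2
  have hKatom : ∀ j ∈ K, ∀ M : Set J, MeasurableSet M → (z ∈ M ↔ j ∈ M) := by
    intro j hj M hM
    constructor
    · intro hz; exact Set.mem_sInter.mp hj M ⟨hM, hz⟩
    · intro hjM
      by_contra hz
      exact (Set.mem_sInter.mp hj Mᶜ ⟨hM.compl, hz⟩) hjM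
  have hΩK : β {ω : (Fin d → ℤ) → J | ∀ ℓ, ω ℓ ∈ K} = 0 := by
    obtain ⟨B, hB1, hB2, hB3⟩ := exists_measurable_superset β {fun _ => z}
    rw [hzero] at hB3
    have hsub : {ω : (Fin d → ℤ) → J | ∀ ℓ, ω ℓ ∈ K} ⊆ B := by
      intro ω hω
      have hmem : (fun _ => z) ∈ B := hB1 rfl
      exact (measurableSet_saturated hB2 (fun i M hM => hKatom _ (hω i) M hM)).mp hmem
    exact le_antisymm (le_trans (measure_mono hsub) hB3.le) zero_le
  have hπ := Real.pi_pos
  set A : (Fin d → ℚ) × ℚ × (Fin d → ℤ) → Set ((Fin d → ℤ) → J) := fun p =>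
    if 0 < p.2.1 ∧ ((p.2.1 : ℝ)) ≤ π/2 ∧ p.2.2 ≠ 0 then
      {ω | ∀ ℓ, angle (latE p.2.2) (latE ℓ - ratE p.1) < ((p.2.1 : ℝ)) → ω ℓ ∈ K}
    else ∅ with hAdef
  have hA0 : ∀ p, β (A p) = 0 := by
    rintro ⟨r, φq, m⟩
    by_cases hcond : 0 < φq ∧ ((φq : ℝ)) ≤ π/2 ∧ m ≠ 0
    swap
    · simp only [hAdef, if_neg hcond]; exact measure_empty
    simp only [hAdef, if_pos hcond]
    obtain ⟨hq0, hqπ2, hm0⟩ := hcond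
    have hφq0 : (0:ℝ) < (φq:ℝ) := by exact_mod_cast hq0
    have hφqπ : (φq:ℝ) ≤ π := by linarith
    set M : EuclideanSpace ℝ (Fin d) := latE m with hMdef
    have hM0 : M ≠ 0 := fun h => hm0 (latE_eq_zero h)
    have hMn : 0 < ‖M‖ := norm_pos_iff.mpr hM0
    set v : EuclideanSpace ℝ (Fin d) := ‖M‖⁻¹ • M with hvdef
    have hvn : ‖v‖ = 1 := by
      rw [hvdef, norm_smul, Real.norm_eq_abs, abs_of_pos (inv_pos.mpr hMn),
        inv_mul_cancel₀ hMn.ne']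
    have hang : ∀ w, angle M w = angle v w := fun w =>
      (angle_smul_left_of_pos M w (inv_pos.mpr hMn)).symm
    have hMv : M = ‖M‖ • v := (smul_inv_smul₀ hMn.ne' M).symm
    set Q' : EuclideanSpace ℝ (Fin d) := ratE r with hQ'def
    set Es : ℕ → Set ((Fin d → ℤ) → J) := fun n =>
      {ω | ∀ ℓ, angle M (latE ℓ + (n:ℝ) • M - Q') < (φq:ℝ) → ω ℓ ∈ K} with hEsdef
    have hmeasE : ∀ n, MeasurableSet (Es n) := by
      intro n
      have he : Es n = ⋂ ℓ, {ω : (Fin d → ℤ) → J |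
          angle M (latE ℓ + (n:ℝ) • M - Q') < (φq:ℝ) → ω ℓ ∈ K} := by
        ext ω; simp [hEsdef, Set.mem_iInter]
      rw [he]
      refine MeasurableSet.iInter fun ℓ => ?_
      by_cases hc : angle M (latE ℓ + (n:ℝ) • M - Q') < (φq:ℝ)
      · have h1 : {ω : (Fin d → ℤ) → J |
            angle M (latE ℓ + (n:ℝ) • M - Q') < (φq:ℝ) → ω ℓ ∈ K}
            = {ω : (Fin d → ℤ) → J | ω ℓ ∈ K} := by
          ext ω; simp [hc]
        rw [h1]
        exact measurable_pi_apply ℓ hKmeas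
      · have h1 : {ω : (Fin d → ℤ) → J |
            angle M (latE ℓ + (n:ℝ) • M - Q') < (φq:ℝ) → ω ℓ ∈ K} = Set.univ := by
          ext ω; simp [hc]
        rw [h1]
        exact MeasurableSet.univ
    have hpre : ∀ n : ℕ, (θ (-((n:ℤ) • m))) ⁻¹' (Es 0) = Es n := by
      intro n
      ext ω
      simp only [Set.mem_preimage, hEsdef, Set.mem_setOf_eq]
      constructor
      · intro h ℓ hc
        have heq : latE (ℓ + (n:ℤ) • m) + ((0:ℕ):ℝ) • M - Q' = latE ℓ + (n:ℝ) • M - Q' := by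
          rw [latE_add, latE_zsmul]
          push_cast
          module
        have h1 := h (ℓ + (n:ℤ) • m) (by rw [heq]; exact hc)
        rw [hθ] at h1
        have h2 : ℓ + (n:ℤ) • m + -((n:ℤ) • m) = ℓ := by abel
        rwa [h2] at h1
      · intro h ℓ hc
        rw [hθ]
        have heq : latE (ℓ + -((n:ℤ) • m)) + (n:ℝ) • M - Q'
            = latE ℓ + ((0:ℕ):ℝ) • M - Q' := by
          rw [show ℓ + -((n:ℤ) • m) = ℓ + (-(n:ℤ)) • m by rw [neg_smul], latE_add, latE_zsmul]
          push_cast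
          module
        exact h _ (by rw [heq]; exact hc)
    have hEn : ∀ n, β (Es n) = β (Es 0) := fun n => by
      rw [← hpre n, (hinv _).measure_preimage (hmeasE 0).nullMeasurableSet]
    have hmono : Antitone Es := by
      apply antitone_nat_of_succ_le
      intro n ω hω ℓ hc
      apply hω ℓ
      have heq : latE ℓ + ((n+1:ℕ):ℝ) • M - Q' = (latE ℓ + (n:ℝ) • M - Q') + ‖M‖ • v := by
        rw [← hMv]
        push_cast
        module
      rw [heq, hang]
      rw [hang] at hc
      exact angle_add_smul_lt hvn hφq0 hφqπ hMn hc
    have hint : (⋂ n, Es n) ⊆ {ω : (Fin d → ℤ) → J | ∀ ℓ, ω ℓ ∈ K} := by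
      intro ω hω ℓ
      simp only [Set.mem_iInter] at hω
      obtain ⟨n, hn⟩ := exists_shift_angle_lt hvn hφq0 hφqπ hMn (latE ℓ - Q')
      apply hω n ℓ
      rw [hang]
      have heq : latE ℓ + (n:ℝ) • M - Q' = latE ℓ - Q' + ((n:ℝ) * ‖M‖) • v := by
        rw [mul_smul, ← hMv]
        module
      rw [heq]
      exact hn
    have hlim := tendsto_measure_iInter_atTop
      (fun n => (hmeasE n).nullMeasurableSet) hmono ⟨0, measure_ne_top β _⟩
    have hconst : (β ∘ Es) = fun _ => β (Es 0) := funext fun n => hEn n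
    rw [hconst] at hlim
    have h0 : β (Es 0) = β (⋂ n, Es n) := tendsto_nhds_unique tendsto_const_nhds hlim
    have hle : β (Es 0) ≤ 0 := by
      rw [h0, ← hΩK]
      exact measure_mono hint
    have hgoal : {ω : (Fin d → ℤ) → J | ∀ ℓ, angle M (latE ℓ - Q') < (φq:ℝ) → ω ℓ ∈ K}
        = Es 0 := by
      ext ω
      simp [hEsdef]
    rw [hgoal]
    exact le_antisymm hle zero_le
  have hcover : {ω : (Fin d → ℤ) → J | ∃ (q x : EuclideanSpace ℝ (Fin d)) (φ : ℝ),
        0 < φ ∧ φ ≤ Real.pi ∧ ‖x‖ = 1 ∧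
        ∀ ℓ : Fin d → ℤ,
          InnerProductGeometry.angle x
            ((WithLp.equiv 2 (Fin d → ℝ)).symm (fun i => (ℓ i : ℝ)) - q) < φ →
          ω ℓ = z} ⊆ ⋃ p, A p := by
    rintro ω ⟨q, x, φ, hφ0, hφπ, hx, hωq⟩
    set φ₀ := min φ (π/2) with hφ₀def
    have hφ₀0 : 0 < φ₀ := lt_min hφ0 (by linarith)
    have hφ₀π2 : φ₀ ≤ π/2 := min_le_right _ _
    set δ := min (Real.cos (φ₀/2) - Real.cos φ₀) ((1 - Real.cos φ₀)/4) with hδdef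
    have hc₀0 : 0 ≤ Real.cos φ₀ := Real.cos_nonneg_of_mem_Icc ⟨by linarith, hφ₀π2⟩
    have hchc₀ : Real.cos φ₀ < Real.cos (φ₀/2) :=
      Real.cos_lt_cos_of_nonneg_of_le_pi (by linarith) (by linarith) (by linarith)
    have hc₀1 : Real.cos φ₀ < 1 := by
      have := Real.cos_lt_cos_of_nonneg_of_le_pi le_rfl (by linarith) hφ₀0
      rwa [Real.cos_zero] at this
    have hδ0 : 0 < δ := lt_min (by linarith) (by linarith)
    obtain ⟨m, N, hN0, hmx⟩ := exists_lattice_close x (show 0 < min (δ/2) (1/2) by positivity)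
    set y : EuclideanSpace ℝ (Fin d) := (N:ℝ)⁻¹ • latE m with hydef
    have hy0 : y ≠ 0 := by
      intro h0
      rw [h0] at hmx
      rw [zero_sub, norm_neg, hx] at hmx
      have : min (δ/2) (1/2:ℝ) ≤ 1/2 := min_le_right _ _
      linarith
    have hNpos : (0:ℝ) < (N:ℝ) := by exact_mod_cast hN0
    have hm0 : m ≠ 0 := by
      intro h0
      apply hy0
      rw [hydef, h0]
      have : latE (0 : Fin d → ℤ) = 0 := by
        ext i; simp [latE_apply]
      rw [this, smul_zero]
    have hlm0 : latE m ≠ 0 := fun h => hm0 (latE_eq_zero h)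
    have hlmn : 0 < ‖latE m‖ := norm_pos_iff.mpr hlm0
    set v : EuclideanSpace ℝ (Fin d) := ‖latE m‖⁻¹ • latE m with hvdef
    have hveq : v = ‖y‖⁻¹ • y := by
      rw [hvdef, hydef, norm_smul, Real.norm_eq_abs, abs_of_pos (inv_pos.mpr hNpos), smul_smul]
      congr 1
      field_simp
    have hvn : ‖v‖ = 1 := by
      rw [hvdef, norm_smul, Real.norm_eq_abs, abs_of_pos (inv_pos.mpr hlmn),
        inv_mul_cancel₀ hlmn.ne']
    have hvx : ‖v - x‖ < δ := by
      rw [hveq]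
      have h1 := unit_close hx hy0
      have h2 : ‖y - x‖ < δ/2 := lt_of_lt_of_le hmx (min_le_left _ _)
      linarith
    obtain ⟨φq, hq1, hq2⟩ := exists_rat_btwn (show (0:ℝ) < φ₀/2 by linarith)
    obtain ⟨r, hr⟩ := exists_rat_close (q + v) hδ0
    refine Set.mem_iUnion.mpr ⟨⟨r, φq, m⟩, ?_⟩
    have hcnd : 0 < φq ∧ ((φq:ℝ)) ≤ π/2 ∧ m ≠ 0 := by
      refine ⟨by exact_mod_cast hq1, by linarith, hm0⟩
    simp only [hAdef, if_pos hcnd, Set.mem_setOf_eq]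
    intro ℓ hc
    have hangl : angle (latE m) (latE ℓ - ratE r) = angle v (latE ℓ - ratE r) :=
      (angle_smul_left_of_pos _ _ (inv_pos.mpr hlmn)).symm
    rw [hangl] at hc
    have hcone := cone_in_cone hx hvn hφ0 hφπ hvx hr hq1 hq2.le hc
    rw [hωq ℓ hcone]
    exact hzK
  refine le_antisymm ?_ zero_le
  calc β _ ≤ β (⋃ p, A p) := measure_mono hcover
  _ ≤ ∑' p, β (A p) := measure_iUnion_le _
  _ = 0 := by simp [hA0]
end
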